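/- arXiv:1112.5187 — 6 statements merged into one kernel-verified Lean document; each statement's English description precedes it below -/
import Mathlib

section
/- Let n ∈ ℕ and let s ∈ T_n([0,1]) be given by s(x) = c_k for x ∈ I_k, with |c_k| = 1 for k = 1,…,n. If s is a generating function of the schlicht function f(z) = z + ∑_{k≥2} a_k z^k, then a_3 = a_2^2 - ∑_{k=1}^n ((2k-1)/n^2) c_k^2. -/
open MeasureTheory Filter Topology

noncomputable section

/-- The `n`-th Taylor coefficient of `f` at `0`. -/
def taylorCoeff (f : ℂ → ℂ) (n : ℕ) : ℂ := iteratedDeriv n f 0 / n.factorial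

/-- The class `S` of schlicht functions: holomorphic and injective on the open unit disk,
normalized by `f 0 = 0` and `f' 0 = 1`. -/
def Schlicht (f : ℂ → ℂ) : Prop :=
  DifferentiableOn ℂ f (Metric.ball 0 1) ∧ Set.InjOn f (Metric.ball 0 1) ∧
    f 0 = 0 ∧ deriv f 0 = 1

/-- `g` is the sequence of functions obtained from `μ` by the Löwner recursion:
`g 1 ≡ 1` and, for `n ≥ 2`,
`g n x = -∫₀ˣ ∑_{k=1}^{n-1} 2k t^(n-k-1) g k t (μ t)^(n-k) dt`. -/
def GenSeq (μ : ℝ → ℂ) (g : ℕ → ℝ → ℂ) : Prop :=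
  (∀ x : ℝ, g 1 x = 1) ∧
  ∀ n, 2 ≤ n → ∀ x : ℝ,
    g n x = -∫ t in (0:ℝ)..x,
      ∑ k ∈ Finset.Ico 1 n, (2 * k : ℂ) * (t : ℂ) ^ (n - k - 1) * g k t * (μ t) ^ (n - k)

/-- `μ : (0,1] → ℂ` (measurable, of modulus one) is a generating function of the
schlicht function `f` if the Löwner recursion applied to `μ` produces the Taylor
coefficients of `f`:  `g n 1 = a_n(f)` for all `n ≥ 2`. -/
def IsGeneratingFn (μ : ℝ → ℂ) (f : ℂ → ℂ) : Prop :=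
  AEMeasurable μ (volume.restrict (Set.Ioc (0:ℝ) 1)) ∧
  (∀ t ∈ Set.Ioc (0:ℝ) 1, ‖μ t‖ = 1) ∧
  ∃ g : ℕ → ℝ → ℂ, GenSeq μ g ∧ ∀ n, 2 ≤ n → g n 1 = taylorCoeff f n

/-- `s` belongs to the class `T_m([0,1])` of step functions with respect to the
equidistant partition `I_k = [(k-1)/m, k/m)`, `k = 1,…,m-1`, `I_m = [(m-1)/m, 1]`,
taking unimodular values `c_k` on `I_k`. -/
def MemT (m : ℕ) (s : ℝ → ℂ) : Prop :=
  ∃ c : ℕ → ℂ, (∀ k, 1 ≤ k → k ≤ m → ‖c k‖ = 1) ∧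
    (∀ k, 1 ≤ k → k ≤ m → ∀ x : ℝ, ((k : ℝ) - 1) / m ≤ x → x < (k : ℝ) / m → s x = c k) ∧
    s 1 = c m

/-- The coefficient vector `(a_2(f), …, a_n(f))`. -/
def coeffVec (n : ℕ) (f : ℂ → ℂ) : Fin (n - 1) → ℂ := fun i => taylorCoeff f (i + 2)

/-- The `n`-th coefficient region `V_n = {(a_2(f),…,a_n(f)) : f ∈ S}`. -/
def Vregion (n : ℕ) : Set (Fin (n - 1) → ℂ) := {a | ∃ f, Schlicht f ∧ a = coeffVec n f}

/-- The subset `V_n^m ⊆ V_n` of coefficient vectors of schlicht functions possessing a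
generating function in `T_m([0,1])`. -/
def VregionStep (n m : ℕ) : Set (Fin (n - 1) → ℂ) :=
  {a | ∃ f, Schlicht f ∧ (∃ s, MemT m s ∧ IsGeneratingFn s f) ∧ a = coeffVec n f}

/-- `γ` is the sequence of logarithmic coefficients of `f`, i.e.
`log (f z / z) = 2 ∑_{n≥1} γ_n z^n` on the unit disk (branch vanishing at `0`). -/
def IsLogCoeff (f : ℂ → ℂ) (γ : ℕ → ℂ) : Prop :=
  ∃ h : ℂ → ℂ, DifferentiableOn ℂ h (Metric.ball 0 1) ∧ h 0 = 0 ∧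
    (∀ z ∈ Metric.ball (0:ℂ) 1, f z = z * Complex.exp (h z)) ∧
    (∀ z ∈ Metric.ball (0:ℂ) 1, HasSum (fun n : ℕ => 2 * γ (n + 1) * z ^ (n + 1)) (h z))

/-- The class `T` of typically real holomorphic functions on the unit disk:
`Im z · Im (f z) ≥ 0`. -/
def TypicallyReal (f : ℂ → ℂ) : Prop :=
  DifferentiableOn ℂ f (Metric.ball 0 1) ∧
    ∀ z ∈ Metric.ball (0:ℂ) 1, 0 ≤ z.im * (f z).im


lemma sq_sum_aux (c : ℕ → ℂ) (n : ℕ) :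
    (∑ j ∈ Finset.Icc 1 n, c j)^2 =
    ∑ k ∈ Finset.range n, ((c (k+1))^2 + 2 * c (k+1) * ∑ j ∈ Finset.Icc 1 k, c j) := by
  induction n with
  | zero => simp
  | succ m ih =>
    rw [Finset.sum_range_succ, ← ih, Finset.sum_Icc_succ_top (by omega)]
    ring

lemma ae_piece {F G : ℝ → ℂ} {u v w : ℝ} (huv : u ≤ v) (hvw : v ≤ w)
    (h : ∀ t, u < t → t < w → F t = G t) :
    ∀ᵐ t ∂(volume : Measure ℝ), t ∈ Set.uIoc u v → F t = G t := by
  have h0 : ∀ᵐ t : ℝ ∂volume, t ≠ w := by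
    rw [ae_iff]
    rw [show {a : ℝ | ¬ a ≠ w} = {w} by ext; simp]
    exact measure_singleton w
  filter_upwards [h0] with t htw ht
  rw [Set.uIoc_of_le huv] at ht
  exact h t ht.1 (lt_of_le_of_ne (ht.2.trans hvw) htw)

lemma step_piece {d : ℂ} {u v w : ℝ} (huv : u ≤ v) (hvw : v ≤ w) {s : ℝ → ℂ}
    (h : ∀ t, u ≤ t → t < w → s t = d) :
    IntervalIntegrable s volume u v ∧ (∫ t in u..v, s t) = ((v - u : ℝ) : ℂ) * d := by
  have hae : ∀ᵐ t ∂(volume : Measure ℝ), t ∈ Set.uIoc u v → (fun _ : ℝ => d) t = s t :=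
    ae_piece huv hvw (fun t ht1 ht2 => (h t ht1.le ht2).symm)
  constructor
  · exact (intervalIntegrable_const (c := d)).congr_ae ((ae_restrict_iff' measurableSet_uIoc).2 hae)
  · rw [← intervalIntegral.integral_congr_ae hae, intervalIntegral.integral_const]
    rw [Complex.real_smul]

/-- **Lemma 1, formula (19).** If the step function `s ∈ T_n([0,1])` with values
`c_1, …, c_n` generates the schlicht function `f`, then
`a_3 = a_2² - ∑_{k=1}^n ((2k-1)/n²) c_k²`. -/
theorem third_coeff_of_step (n : ℕ) (hn : 1 ≤ n) (c : ℕ → ℂ)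
    (hc : ∀ k, 1 ≤ k → k ≤ n → ‖c k‖ = 1)
    (s : ℝ → ℂ)
    (hstep : ∀ k, 1 ≤ k → k ≤ n → ∀ x : ℝ, ((k : ℝ) - 1) / n ≤ x → x < (k : ℝ) / n → s x = c k)
    (hs1 : s 1 = c n)
    (f : ℂ → ℂ) (hf : Schlicht f) (hgen : IsGeneratingFn s f) :
    taylorCoeff f 3 = (taylorCoeff f 2) ^ 2 -
      ∑ k ∈ Finset.Icc 1 n, ((2 * (k : ℂ) - 1) / (n : ℂ) ^ 2) * (c k) ^ 2 := by
  obtain ⟨-, -, g, ⟨hg1, hgrec⟩, hgval⟩ := hgen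
  have hn0 : (0:ℝ) < (n:ℝ) := by exact_mod_cast Nat.pos_of_ne_zero (by omega)
  have hnC : (n:ℂ) ≠ 0 := by
    exact_mod_cast Nat.cast_ne_zero.2 (by omega : n ≠ 0)
  set P : ℕ → ℝ := fun j => (j:ℝ)/n with hP
  set A : ℕ → ℂ := fun k => (∑ j ∈ Finset.Icc 1 k, c j) / (n:ℂ) with hA
  have hPle : ∀ k : ℕ, P k ≤ P (k+1) := by
    intro k
    simp only [hP]
    exact (div_le_div_iff_of_pos_right hn0).2 (by push_cast; linarith)
  have hPsucc : ∀ k : ℕ, P (k+1) = ((k:ℝ)+1)/n := by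
    intro k; simp only [hP]; push_cast; ring
  -- s equals c (k+1) on [P k, P (k+1))
  have hsp : ∀ k < n, ∀ t : ℝ, P k ≤ t → t < P (k+1) → s t = c (k+1) := by
    intro k hk t h1 h2
    have e : ((k+1 : ℕ):ℝ) - 1 = (k:ℝ) := by push_cast; ring
    refine hstep (k+1) (by omega) (by omega) t ?_ ?_
    · rw [e]; exact h1
    · exact h2
  have hpieceS : ∀ k < n, ∀ v : ℝ, P k ≤ v → v ≤ P (k+1) →
      IntervalIntegrable s volume (P k) v ∧
      (∫ t in (P k)..v, s t) = ((v - P k : ℝ) : ℂ) * c (k+1) :=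
    fun k hk v h1 h2 => step_piece h1 h2 (fun t ht1 ht2 => hsp k hk t ht1 ht2)
  -- cumulative integral of s
  have hcum : ∀ k ≤ n, IntervalIntegrable s volume 0 (P k) ∧
      (∫ t in (0:ℝ)..(P k), s t) = A k := by
    intro k hk
    induction k with
    | zero => simp [hP, hA]
    | succ m ih =>
      have ihm := ih (by omega)
      have hp := hpieceS m (by omega) (P (m+1)) (hPle m) le_rfl
      have hP0 : P 0 = 0 := by simp [hP]
      refine ⟨by rw [← hP0] at ihm ⊢; exact ihm.1.trans hp.1, ?_⟩
      rw [← hP0, ← intervalIntegral.integral_add_adjacent_intervals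
        (by rw [hP0]; exact ihm.1) hp.1, hP0, ihm.2, hp.2]
      have e2 : ((P (m+1) - P m : ℝ) : ℂ) = 1/(n:ℂ) := by
        simp only [hP]
        push_cast
        field_simp
        ring
      rw [e2]
      simp only [hA, Finset.sum_Icc_succ_top (by omega : 1 ≤ m + 1)]
      field_simp
  -- g 2 as an integral
  have hg2 : ∀ v : ℝ, g 2 v = -(2 * ∫ t in (0:ℝ)..v, s t) := by
    intro v
    rw [hgrec 2 le_rfl v]
    have h12 : Finset.Ico 1 2 = {1} := rfl
    simp only [h12, Finset.sum_singleton, hg1]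
    norm_num
  -- g 2 is linear on each piece
  have hg2lin : ∀ k < n, ∀ v : ℝ, P k ≤ v → v ≤ P (k+1) →
      g 2 v = -2 * (A k + c (k+1) * ((v - P k : ℝ) : ℂ)) := by
    intro k hk v h1 h2
    rw [hg2 v, ← intervalIntegral.integral_add_adjacent_intervals
      (hcum k (by omega)).1 (hpieceS k hk v h1 h2).1,
      (hcum k (by omega)).2, (hpieceS k hk v h1 h2).2]
    ring
  -- g 3 at 1
  set F : ℝ → ℂ := fun t => 2 * (t:ℂ) * (s t)^2 + 4 * g 2 t * s t with hF
  have hg3 : g 3 1 = -∫ t in (0:ℝ)..(1:ℝ), F t := by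
    rw [hgrec 3 (by norm_num) 1]
    have h13 : Finset.Ico 1 3 = {1, 2} := rfl
    congr 1
    apply intervalIntegral.integral_congr
    intro t _
    show ∑ k ∈ (Finset.Ico 1 3 : Finset ℕ),
        2 * (k : ℂ) * (t : ℂ) ^ (3 - k - 1) * g k t * (s t) ^ (3 - k) = _
    rw [h13, Finset.sum_pair (by norm_num : (1:ℕ) ≠ 2), hg1]
    norm_num
    rfl
  -- value of F-integral on each piece
  have hpieceF : ∀ k < n,
      IntervalIntegrable F volume (P k) (P (k+1)) ∧
      (∫ t in (P k)..(P (k+1)), F t) =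
        (2*(k:ℂ)-3) * (c (k+1))^2/(n:ℂ)^2 - 8*c (k+1)*A k/(n:ℂ) := by
    intro k hk
    set d := c (k+1) with hd
    set G : ℝ → ℂ := fun t => (-6*d^2) * (t:ℂ) + (8*d^2*((P k : ℝ):ℂ) - 8*d*A k) with hG
    have hFG : ∀ t, P k < t → t < P (k+1) → F t = G t := by
      intro t h1 h2
      simp only [hF, hG]
      rw [hsp k hk t h1.le h2, hg2lin k hk t h1.le h2.le]
      push_cast
      ring
    have hae := ae_piece (hPle k) le_rfl hFG
    have hGc : Continuous G := by
      simp only [hG]; fun_prop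
    have hGint := hGc.intervalIntegrable (μ := volume) (P k) (P (k+1))
    have hFG' : F =ᵐ[volume.restrict (Set.uIoc (P k) (P (k+1)))] G :=
      (ae_restrict_iff' measurableSet_uIoc).2 hae
    refine ⟨hGint.congr_ae (Filter.EventuallyEq.symm hFG'), ?_⟩
    rw [intervalIntegral.integral_congr_ae hae]
    simp only [hG]
    rw [intervalIntegral.integral_add (f := fun t : ℝ => (-6*d^2) * (t:ℂ))
      ((continuous_const.mul Complex.continuous_ofReal).intervalIntegrable (μ := volume) _ _)
      intervalIntegrable_const,
      intervalIntegral.integral_const_mul, intervalIntegral.integral_const,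
      intervalIntegral.integral_ofReal, integral_id, Complex.real_smul]
    simp only [hP]
    push_cast
    field_simp
    ring
  -- assemble g 3 1
  have key3 : g 3 1 = -∑ k ∈ Finset.range n,
      ((2*(k:ℂ)-3) * (c (k+1))^2/(n:ℂ)^2 - 8*c (k+1)*A k/(n:ℂ)) := by
    rw [hg3]
    have hadj := intervalIntegral.sum_integral_adjacent_intervals (μ := volume)
      (a := P) (n := n) (f := F) (fun k hk => (hpieceF k hk).1)
    have hP0 : P 0 = 0 := by simp [hP]
    have hPn : P n = 1 := by simp [hP]; omega
    rw [hP0, hPn] at hadj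
    rw [← hadj]
    congr 1
    exact Finset.sum_congr rfl (fun k hk => (hpieceF k (Finset.mem_range.1 hk)).2)
  have key2 : g 2 1 = -2 * A n := by
    have hPn : P n = 1 := by simp [hP]; omega
    rw [hg2 1, ← hPn, (hcum n le_rfl).2]
    ring
  rw [← hgval 3 (by norm_num), ← hgval 2 le_rfl, key3, key2]
  have hre : ∑ k ∈ Finset.Icc 1 n, ((2 * (k : ℂ) - 1) / (n : ℂ) ^ 2) * (c k) ^ 2
      = ∑ k ∈ Finset.range n, ((2 * ((k:ℂ)+1) - 1) / (n : ℂ) ^ 2) * (c (k+1)) ^ 2 := by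
    rw [← Finset.Ico_add_one_right_eq_Icc, Finset.sum_Ico_eq_sum_range]
    apply Finset.sum_congr (by norm_num)
    intro k _
    rw [Nat.add_comm 1 k]
    push_cast
    ring
  rw [hre]
  have hsq : (-2*A n)^2 = (4/(n:ℂ)^2) *
      ∑ k ∈ Finset.range n, ((c (k+1))^2 + 2 * c (k+1) * ∑ j ∈ Finset.Icc 1 k, c j) := by
    rw [← sq_sum_aux]
    simp only [hA]
    field_simp
    ring
  rw [hsq, Finset.mul_sum, ← Finset.sum_sub_distrib, ← Finset.sum_neg_distrib]
  apply Finset.sum_congr rfl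
  intro k _
  have hAk : A k = (∑ j ∈ Finset.Icc 1 k, c j) / (n:ℂ) := rfl
  rw [hAk]
  field_simp
  ring


end
end

section
/- Let n ∈ ℕ and let s ∈ T_n([0,1]) be given by s(x) = c_k for x ∈ I_k, with |c_k| = 1 for k = 1,…,n, and set c_0 = 0. If s is a generating function of the schlicht function f(z) = z + ∑_{k≥2} a_k z^k, then a_4 = 3 a_2 a_3 - 2 a_2^3 - (2/n^3) ∑_{k=1}^n c_k^2 { k^2 c_k + (2k-1) ∑_{j=0}^{k-1} c_j }. -/
open MeasureTheory Filter Topology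

noncomputable section

namespace SchlichtStepAux
open MeasureTheory intervalIntegral Set
noncomputable def primA (s : ℝ → ℂ) (x : ℝ) : ℂ := ∫ t in (0:ℝ)..x, s t
noncomputable def primB (s : ℝ → ℂ) (x : ℝ) : ℂ := ∫ t in (0:ℝ)..x, (t:ℂ) * s t ^ 2

variable {n : ℕ} {c : ℕ → ℂ} {s : ℝ → ℂ}

lemma hasDerivAt_coe (t : ℝ) : HasDerivAt (fun t : ℝ => (t:ℂ)) 1 t := by
  simpa using (hasDerivAt_id t).ofReal_comp

lemma hasDerivAt_coe_sq (t : ℝ) : HasDerivAt (fun t : ℝ => (t:ℂ)^2) (2*(t:ℂ)) t := by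
  have := (hasDerivAt_coe t).mul (hasDerivAt_coe t)
  simp only [pow_two]; exact this.congr_deriv (by ring)

lemma hasDerivAt_cpoly (t : ℝ) (u v w : ℂ) :
    HasDerivAt (fun t : ℝ => u*(t:ℂ) + v*(t:ℂ)^2/2 + w*(t:ℂ)^3/3)
    (u + v*(t:ℂ) + w*(t:ℂ)^2) t := by
  have h : HasDerivAt (fun t : ℝ => (t:ℂ)) 1 t := by
    simpa using (hasDerivAt_id t).ofReal_comp
  have h2 : HasDerivAt (fun t : ℝ => (t:ℂ)^2) (2*(t:ℂ)) t := by
    have := h.mul h; simp only [pow_two]; exact this.congr_deriv (by ring)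
  have h3 : HasDerivAt (fun t : ℝ => (t:ℂ)^3) (3*(t:ℂ)^2) t := by
    have := h2.mul h
    have e : (fun t : ℝ => (t:ℂ)^3) = fun t : ℝ => (t:ℂ)^2 * (t:ℂ) := by funext x; ring
    rw [e]; exact this.congr_deriv (by ring)
  have := ((h.const_mul u).add ((h2.const_mul v).div_const 2)).add ((h3.const_mul w).div_const 3)
  exact this.congr_deriv (by ring)

lemma integral_cpoly (a b : ℝ) (u v w : ℂ) :
    ∫ t in a..b, (u + v * (t:ℂ) + w * (t:ℂ)^2) =
      u * ((b:ℂ) - a) + v * ((b:ℂ)^2 - (a:ℂ)^2)/2 + w * ((b:ℂ)^3 - (a:ℂ)^3)/3 := by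
  have hcont : Continuous (fun t : ℝ => u + v * (t:ℂ) + w * (t:ℂ)^2) := by
    continuity
  rw [integral_eq_sub_of_hasDerivAt (fun t _ => hasDerivAt_cpoly t u v w)
    (hcont.intervalIntegrable a b)]
  ring
variable {n : ℕ} {c : ℕ → ℂ} {s : ℝ → ℂ}
lemma step_ae (hstep' : ∀ i < n, ∀ x ∈ Set.Ico ((i:ℝ)/n) ((i+1:ℝ)/n), s x = c (i+1))
    {i : ℕ} (hi : i < n) :
    s =ᵐ[volume.restrict (Set.Ioc ((i:ℝ)/n) ((i+1:ℝ)/n))] fun _ => c (i+1) := by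
  have h1 : ∀ᵐ x ∂(volume.restrict (Set.Ioc ((i:ℝ)/n) ((i+1:ℝ)/n))),
      x ∈ Set.Ioc ((i:ℝ)/n) ((i+1:ℝ)/n) := ae_restrict_mem measurableSet_Ioc
  have h2 : ∀ᵐ x ∂(volume.restrict (Set.Ioc ((i:ℝ)/n) ((i+1:ℝ)/n))), x ≠ ((i+1:ℝ)/n) := by
    refine ae_restrict_of_ae ?_
    have : volume ({((i+1:ℝ)/n)} : Set ℝ) = 0 := Real.volume_singleton
    rw [Filter.eventually_iff, mem_ae_iff]
    convert this using 2
    ext x; simp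
  filter_upwards [h1, h2] with x hx hne
  exact hstep' i hi x ⟨le_of_lt hx.1, lt_of_le_of_ne hx.2 hne⟩

lemma cover (hn : 1 ≤ n) {x : ℝ} (hx : x ∈ Set.Ico (0:ℝ) 1) :
    ∃ i < n, x ∈ Set.Ico ((i:ℝ)/n) ((i+1:ℝ)/n) := by
  have hn' : (0:ℝ) < n := by positivity
  set i := ⌊(n:ℝ) * x⌋₊ with hi
  have hnx : 0 ≤ (n:ℝ) * x := by nlinarith [hx.1]
  refine ⟨i, ?_, ?_, ?_⟩
  · rw [hi, Nat.floor_lt hnx]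
    nlinarith [hx.2]
  · rw [div_le_iff₀ hn']
    calc (i:ℝ) ≤ (n:ℝ)*x := Nat.floor_le hnx
    _ = x * n := by ring
  · rw [lt_div_iff₀ hn']
    have := Nat.lt_floor_add_one ((n:ℝ)*x)
    push_cast
    nlinarith
lemma intInt (hn : 1 ≤ n)
    (hstep' : ∀ i < n, ∀ x ∈ Set.Ico ((i:ℝ)/n) ((i+1:ℝ)/n), s x = c (i+1))
    (φ : ℝ → ℂ) (hφ : ContinuousOn φ (Set.Icc 0 1)) (m : ℕ) :
    IntervalIntegrable (fun t => φ t * s t ^ m) volume 0 1 := by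
  have hn' : (0:ℝ) < n := by positivity
  have key : ∀ j ≤ n, IntervalIntegrable (fun t => φ t * s t ^ m) volume 0 ((j:ℝ)/n) := by
    intro j hj
    induction j with
    | zero => simp [IntervalIntegrable.refl]
    | succ i ih =>
      have hi : i < n := hj
      have h1 : IntervalIntegrable (fun t => φ t * s t ^ m) volume ((i:ℝ)/n) ((i+1:ℝ)/n) := by
        have hle : (i:ℝ)/n ≤ (i+1:ℝ)/n := by gcongr; linarith
        have hsub : Set.uIcc ((i:ℝ)/n) ((i+1:ℝ)/n) ⊆ Set.Icc 0 1 := by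
          rw [Set.uIcc_of_le hle]
          apply Set.Icc_subset_Icc
          · positivity
          · rw [div_le_one hn']; exact_mod_cast hj
        have hc : IntervalIntegrable (fun t => φ t * c (i+1) ^ m) volume ((i:ℝ)/n) ((i+1:ℝ)/n) :=
          ((hφ.mono hsub).mul continuousOn_const).intervalIntegrable
        refine hc.congr_ae ?_
        have := step_ae hstep' hi
        rw [Set.uIoc_of_le hle]
        filter_upwards [this] with x hx
        rw [hx]
      have hcast : ((i+1:ℕ):ℝ) = (i:ℝ)+1 := by push_cast; ring
      rw [hcast]
      exact (ih (le_of_lt hi)).trans h1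
  have := key n le_rfl
  rwa [div_self (ne_of_gt hn')] at this
lemma intIntSub (hn : 1 ≤ n)
    (hstep' : ∀ i < n, ∀ x ∈ Set.Ico ((i:ℝ)/n) ((i+1:ℝ)/n), s x = c (i+1))
    (φ : ℝ → ℂ) (hφ : ContinuousOn φ (Set.Icc 0 1)) (m : ℕ) {a b : ℝ}
    (ha : a ∈ Set.Icc (0:ℝ) 1) (hb : b ∈ Set.Icc (0:ℝ) 1) :
    IntervalIntegrable (fun t => φ t * s t ^ m) volume a b := by
  refine (intInt hn hstep' φ hφ m).mono_set ?_
  rw [Set.uIcc_of_le (zero_le_one)]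
  exact Set.uIcc_subset_Icc ha hb

lemma sInt (hn : 1 ≤ n)
    (hstep' : ∀ i < n, ∀ x ∈ Set.Ico ((i:ℝ)/n) ((i+1:ℝ)/n), s x = c (i+1))
    {a b : ℝ} (ha : a ∈ Set.Icc (0:ℝ) 1) (hb : b ∈ Set.Icc (0:ℝ) 1) :
    IntervalIntegrable s volume a b := by
  have := intIntSub hn hstep' (fun _ => 1) continuousOn_const 1 ha hb
  simpa using this

lemma grid_mem (hn : 1 ≤ n) {j : ℕ} (hj : j ≤ n) : ((j:ℝ)/n) ∈ Set.Icc (0:ℝ) 1 := by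
  have hn' : (0:ℝ) < n := by positivity
  constructor
  · positivity
  · rw [div_le_one hn']; exact_mod_cast hj

lemma grid_le (hn : 1 ≤ n) (i : ℕ) : ((i:ℝ)/n) ≤ ((i+1:ℝ)/n) := by
  have hn' : (0:ℝ) < n := by positivity
  gcongr; linarith

-- a.e. on subinterval Ioc (i/n) t for t ≤ (i+1)/n
lemma step_ae_imp (hstep' : ∀ i < n, ∀ x ∈ Set.Ico ((i:ℝ)/n) ((i+1:ℝ)/n), s x = c (i+1))
    {i : ℕ} (hi : i < n) {t : ℝ} (ht : t ≤ ((i+1:ℝ)/n)) :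
    ∀ᵐ x ∂(volume : Measure ℝ), x ∈ Set.Ioc ((i:ℝ)/n) t → s x = c (i+1) := by
  have h := ae_imp_of_ae_restrict (step_ae hstep' hi)
  filter_upwards [h] with x hx hxt
  exact hx ⟨hxt.1, le_trans hxt.2 ht⟩

lemma primA_deriv (hn : 1 ≤ n)
    (hstep' : ∀ i < n, ∀ x ∈ Set.Ico ((i:ℝ)/n) ((i+1:ℝ)/n), s x = c (i+1))
    {t : ℝ} (ht : t ∈ Set.Ico (0:ℝ) 1) :
    HasDerivWithinAt (primA s) (s t) (Set.Ici t) t := by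
  obtain ⟨i, hi, hti⟩ := cover hn ht
  have hn' : (0:ℝ) < n := by positivity
  have hub : ((i:ℝ)+1)/n ≤ 1 := by
    rw [div_le_one hn']; exact_mod_cast hi
  have affine : ∀ y ∈ Set.Ico t (((i:ℝ)+1)/n),
      primA s y = primA s t + ((y:ℂ) - (t:ℂ)) * s t := by
    intro y hy
    have hty : t ≤ y := hy.1
    have hyIcc : y ∈ Set.Icc (0:ℝ) 1 := ⟨le_trans ht.1 hty, le_trans (le_of_lt hy.2) hub⟩
    have htIcc : t ∈ Set.Icc (0:ℝ) 1 := ⟨ht.1, le_of_lt ht.2⟩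
    have h0 : (0:ℝ) ∈ Set.Icc (0:ℝ) 1 := by norm_num
    have hsub : ∫ u in t..y, s u = primA s y - primA s t := by
      rw [primA, primA, ← integral_interval_sub_left (sInt hn hstep' h0 hyIcc)
        (sInt hn hstep' h0 htIcc)]
    have hconst : ∫ u in t..y, s u = ((y - t : ℝ)) • c (i+1) := by
      rw [intervalIntegral.integral_congr (g := fun _ => c (i+1)) ?_, intervalIntegral.integral_const]
      intro u hu
      rw [Set.uIcc_of_le hty] at hu
      exact hstep' i hi u ⟨le_trans hti.1 hu.1, lt_of_le_of_lt hu.2 hy.2⟩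
    have hst : s t = c (i+1) := hstep' i hi t hti
    rw [hconst, Complex.real_smul] at hsub
    rw [hst]
    push_cast at hsub ⊢
    linear_combination -hsub
  have hq : HasDerivWithinAt (fun y : ℝ => primA s t + ((y:ℂ) - (t:ℂ)) * s t)
      (s t) (Set.Ici t) t := by
    have := (((hasDerivAt_coe t).sub_const (t:ℂ)).mul_const (s t)).const_add (primA s t)
    simpa using this.hasDerivWithinAt
  refine hq.congr_of_eventuallyEq ?_ (by simp)
  have hmem : Set.Ico t (((i:ℝ)+1)/n) ∈ nhdsWithin t (Set.Ici t) :=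
    Ico_mem_nhdsGE hti.2
  filter_upwards [hmem] with y hy
  exact affine y hy

lemma primB_deriv (hn : 1 ≤ n)
    (hstep' : ∀ i < n, ∀ x ∈ Set.Ico ((i:ℝ)/n) ((i+1:ℝ)/n), s x = c (i+1))
    {t : ℝ} (ht : t ∈ Set.Ico (0:ℝ) 1) :
    HasDerivWithinAt (primB s) ((t:ℂ) * s t ^ 2) (Set.Ici t) t := by
  obtain ⟨i, hi, hti⟩ := cover hn ht
  have hn' : (0:ℝ) < n := by positivity
  have hub : ((i:ℝ)+1)/n ≤ 1 := by
    rw [div_le_one hn']; exact_mod_cast hi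
  have hcont : ContinuousOn (fun u : ℝ => (u:ℂ)) (Set.Icc 0 1) :=
    Complex.continuous_ofReal.continuousOn
  have affine : ∀ y ∈ Set.Ico t (((i:ℝ)+1)/n),
      primB s y = primB s t + (((y:ℂ)^2 - (t:ℂ)^2)/2) * s t ^ 2 := by
    intro y hy
    have hty : t ≤ y := hy.1
    have hyIcc : y ∈ Set.Icc (0:ℝ) 1 := ⟨le_trans ht.1 hty, le_trans (le_of_lt hy.2) hub⟩
    have htIcc : t ∈ Set.Icc (0:ℝ) 1 := ⟨ht.1, le_of_lt ht.2⟩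
    have h0 : (0:ℝ) ∈ Set.Icc (0:ℝ) 1 := by norm_num
    have hsub : ∫ u in t..y, (u:ℂ) * s u ^ 2 = primB s y - primB s t := by
      rw [primB, primB, ← integral_interval_sub_left
        (intIntSub hn hstep' _ hcont 2 h0 hyIcc) (intIntSub hn hstep' _ hcont 2 h0 htIcc)]
    have hst : s t = c (i+1) := hstep' i hi t hti
    have hconst : ∫ u in t..y, (u:ℂ) * s u ^ 2
        = c (i+1)^2 * ((y:ℂ)^2 - (t:ℂ)^2)/2 := by
      rw [intervalIntegral.integral_congr (g := fun u : ℝ => (0:ℂ) + c (i+1)^2 * (u:ℂ) + 0 * (u:ℂ)^2) ?_,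
        integral_cpoly]
      · ring
      · intro u hu
        rw [Set.uIcc_of_le hty] at hu
        show (u:ℂ) * s u ^ 2 = _
        rw [hstep' i hi u ⟨le_trans hti.1 hu.1, lt_of_le_of_lt hu.2 hy.2⟩]
        ring
    rw [hconst] at hsub
    rw [hst]
    linear_combination -hsub
  have hq : HasDerivWithinAt (fun y : ℝ => primB s t + (((y:ℂ)^2 - (t:ℂ)^2)/2) * s t ^ 2)
      ((t:ℂ) * s t ^ 2) (Set.Ici t) t := by
    have := ((((hasDerivAt_coe_sq t).sub_const ((t:ℂ)^2)).div_const 2).mul_const (s t ^ 2)).const_add (primB s t)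
    refine HasDerivAt.hasDerivWithinAt ?_
    convert this using 1
    ring
  refine hq.congr_of_eventuallyEq ?_ (by simp)
  have hmem : Set.Ico t (((i:ℝ)+1)/n) ∈ nhdsWithin t (Set.Ici t) :=
    Ico_mem_nhdsGE hti.2
  filter_upwards [hmem] with y hy
  exact affine y hy

lemma primA_cont (hn : 1 ≤ n)
    (hstep' : ∀ i < n, ∀ x ∈ Set.Ico ((i:ℝ)/n) ((i+1:ℝ)/n), s x = c (i+1)) :
    ContinuousOn (primA s) (Set.Icc 0 1) := by
  have h : IntervalIntegrable s volume 0 1 := sInt hn hstep' (by norm_num) (by norm_num)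
  have := continuousOn_primitive_interval (a := 0) (b := 1) (f := s) (μ := volume)
    ((intervalIntegrable_iff_integrableOn_Icc_of_le zero_le_one).1 h |>.mono_set (by
      rw [Set.uIcc_of_le zero_le_one]))
  rwa [Set.uIcc_of_le zero_le_one] at this

lemma primB_cont (hn : 1 ≤ n)
    (hstep' : ∀ i < n, ∀ x ∈ Set.Ico ((i:ℝ)/n) ((i+1:ℝ)/n), s x = c (i+1)) :
    ContinuousOn (primB s) (Set.Icc 0 1) := by
  have h : IntervalIntegrable (fun t => (t:ℂ) * s t ^ 2) volume 0 1 :=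
    intInt hn hstep' _ Complex.continuous_ofReal.continuousOn 2
  have := continuousOn_primitive_interval (a := 0) (b := 1) (f := fun t => (t:ℂ) * s t ^ 2)
    (μ := volume)
    ((intervalIntegrable_iff_integrableOn_Icc_of_le zero_le_one).1 h |>.mono_set (by
      rw [Set.uIcc_of_le zero_le_one]))
  rwa [Set.uIcc_of_le zero_le_one] at this

-- FTC identity (i)
lemma ftc_sA (hn : 1 ≤ n)
    (hstep' : ∀ i < n, ∀ x ∈ Set.Ico ((i:ℝ)/n) ((i+1:ℝ)/n), s x = c (i+1))
    {x : ℝ} (hx : x ∈ Set.Icc (0:ℝ) 1) :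
    ∫ t in (0:ℝ)..x, s t * primA s t = primA s x ^ 2 / 2 := by
  have hIccsub : Set.Icc (0:ℝ) x ⊆ Set.Icc 0 1 := Set.Icc_subset_Icc le_rfl hx.2
  have hcont : ContinuousOn (fun y => primA s y ^ 2 / 2) (Set.Icc 0 x) :=
    (((primA_cont hn hstep').mono hIccsub).pow 2).div_const 2
  have hderiv : ∀ t ∈ Set.Ioo (0:ℝ) x, HasDerivWithinAt (fun y => primA s y ^ 2 / 2)
      (s t * primA s t) (Set.Ioi t) t := by
    intro t htx
    have ht : t ∈ Set.Ico (0:ℝ) 1 := ⟨le_of_lt htx.1, lt_of_lt_of_le htx.2 hx.2⟩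
    have hA := (primA_deriv hn hstep' ht).mono (Set.Ioi_subset_Ici_self)
    have := (hA.mul hA).div_const 2
    have heq : (fun y => primA s y ^ 2 / 2) = fun y => primA s y * primA s y / 2 := by
      funext y; ring
    rw [heq]
    exact this.congr_deriv (by ring)
  have hint : IntervalIntegrable (fun t => s t * primA s t) volume 0 x := by
    have := intIntSub hn hstep' (primA s) (primA_cont hn hstep') 1
      (Set.left_mem_Icc.2 zero_le_one) hx
    refine this.congr ?_
    intro t _
    simp [mul_comm]
  have := integral_eq_sub_of_hasDeriv_right_of_le hx.1 hcont hderiv hint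
  rw [this]
  have h0 : primA s 0 = 0 := by simp [primA]
  rw [h0]
  ring

lemma ftc_sA2 (hn : 1 ≤ n)
    (hstep' : ∀ i < n, ∀ x ∈ Set.Ico ((i:ℝ)/n) ((i+1:ℝ)/n), s x = c (i+1)) :
    ∫ t in (0:ℝ)..1, s t * primA s t ^ 2 = primA s 1 ^ 3 / 3 := by
  have hcont : ContinuousOn (fun y => primA s y ^ 3 / 3) (Set.Icc 0 1) :=
    ((primA_cont hn hstep').pow 3).div_const 3
  have hderiv : ∀ t ∈ Set.Ioo (0:ℝ) 1, HasDerivWithinAt (fun y => primA s y ^ 3 / 3)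
      (s t * primA s t ^ 2) (Set.Ioi t) t := by
    intro t htx
    have ht : t ∈ Set.Ico (0:ℝ) 1 := ⟨le_of_lt htx.1, htx.2⟩
    have hA := (primA_deriv hn hstep' ht).mono (Set.Ioi_subset_Ici_self)
    have := ((hA.mul hA).mul hA).div_const 3
    have heq : (fun y => primA s y ^ 3 / 3) = fun y => primA s y * primA s y * primA s y / 3 := by
      funext y; ring
    rw [heq]
    exact this.congr_deriv (by simp only [Pi.mul_apply]; ring)
  have hint : IntervalIntegrable (fun t => s t * primA s t ^ 2) volume 0 1 := by
    have := intIntSub hn hstep' (fun t => primA s t ^ 2) ((primA_cont hn hstep').pow 2) 1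
      (Set.left_mem_Icc.2 zero_le_one) (Set.right_mem_Icc.2 zero_le_one)
    refine this.congr ?_
    intro t _
    simp [mul_comm]
  have := integral_eq_sub_of_hasDeriv_right_of_le zero_le_one hcont hderiv hint
  rw [this]
  have h0 : primA s 0 = 0 := by simp [primA]
  rw [h0]
  ring

lemma ftc_AB (hn : 1 ≤ n)
    (hstep' : ∀ i < n, ∀ x ∈ Set.Ico ((i:ℝ)/n) ((i+1:ℝ)/n), s x = c (i+1)) :
    ∫ t in (0:ℝ)..1, (s t * primB s t + (t:ℂ) * s t ^ 2 * primA s t)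
      = primA s 1 * primB s 1 := by
  have hcont : ContinuousOn (fun y => primA s y * primB s y) (Set.Icc 0 1) :=
    (primA_cont hn hstep').mul (primB_cont hn hstep')
  have hderiv : ∀ t ∈ Set.Ioo (0:ℝ) 1, HasDerivWithinAt (fun y => primA s y * primB s y)
      (s t * primB s t + (t:ℂ) * s t ^ 2 * primA s t) (Set.Ioi t) t := by
    intro t htx
    have ht : t ∈ Set.Ico (0:ℝ) 1 := ⟨le_of_lt htx.1, htx.2⟩
    have hA := (primA_deriv hn hstep' ht).mono (Set.Ioi_subset_Ici_self)
    have hB := (primB_deriv hn hstep' ht).mono (Set.Ioi_subset_Ici_self)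
    have := hA.mul hB
    exact this.congr_deriv (by ring)
  have hint : IntervalIntegrable
      (fun t => s t * primB s t + (t:ℂ) * s t ^ 2 * primA s t) volume 0 1 := by
    have h1 := intIntSub hn hstep' (primB s) (primB_cont hn hstep') 1
      (Set.left_mem_Icc.2 zero_le_one) (Set.right_mem_Icc.2 zero_le_one)
    have h2 := intIntSub hn hstep' (fun t => (t:ℂ) * primA s t)
      (Complex.continuous_ofReal.continuousOn.mul (primA_cont hn hstep')) 2
      (Set.left_mem_Icc.2 zero_le_one) (Set.right_mem_Icc.2 zero_le_one)
    refine (h1.add h2).congr ?_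
    intro t _
    ring
  have := integral_eq_sub_of_hasDeriv_right_of_le zero_le_one hcont hderiv hint
  rw [this]
  have h0 : primA s 0 = 0 := by simp [primA]
  have h0' : primB s 0 = 0 := by simp [primB]
  rw [h0, h0']
  ring

section G
variable {g : ℕ → ℝ → ℂ}

section G
variable {g : ℕ → ℝ → ℂ}
lemma g2_rep (hg1 : ∀ x : ℝ, g 1 x = 1)
    (hrec : ∀ m, 2 ≤ m → ∀ x : ℝ, g m x = -∫ t in (0:ℝ)..x,
      ∑ k ∈ Finset.Ico 1 m, (2 * k : ℂ) * (t : ℂ) ^ (m - k - 1) * g k t * (s t) ^ (m - k))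
    (x : ℝ) : g 2 x = -2 * primA s x := by
  have := hrec 2 le_rfl x
  rw [this, primA]
  have he : Finset.Ico 1 2 = {1} := rfl
  simp only [he, Finset.sum_singleton, hg1]
  rw [show (fun t : ℝ => (2 * (1:ℕ) : ℂ) * (t:ℂ) ^ (2-1-1) * 1 * s t ^ (2-1)) = fun t => 2 * s t by
    funext t; norm_num]
  rw [intervalIntegral.integral_const_mul]
  ring

lemma g3_rep (hn : 1 ≤ n)
    (hstep' : ∀ i < n, ∀ x ∈ Set.Ico ((i:ℝ)/n) ((i+1:ℝ)/n), s x = c (i+1))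
    (hg1 : ∀ x : ℝ, g 1 x = 1)
    (hrec : ∀ m, 2 ≤ m → ∀ x : ℝ, g m x = -∫ t in (0:ℝ)..x,
      ∑ k ∈ Finset.Ico 1 m, (2 * k : ℂ) * (t : ℂ) ^ (m - k - 1) * g k t * (s t) ^ (m - k))
    {x : ℝ} (hx : x ∈ Set.Icc (0:ℝ) 1) :
    g 3 x = -2 * primB s x + 4 * primA s x ^ 2 := by
  have h0 : (0:ℝ) ∈ Set.Icc (0:ℝ) 1 := Set.left_mem_Icc.2 zero_le_one
  have := hrec 3 (by norm_num) x
  rw [this]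
  have he : Finset.Ico 1 3 = ({1, 2} : Finset ℕ) := rfl
  simp only [he, Finset.sum_insert (by decide : (1:ℕ) ∉ ({2}:Finset ℕ)), Finset.sum_singleton,
    hg1, g2_rep hg1 hrec]
  have heq : (fun t : ℝ => (2 * (1:ℕ) : ℂ) * (t:ℂ) ^ (3-1-1) * 1 * s t ^ (3-1)
      + (2 * (2:ℕ) : ℂ) * (t:ℂ) ^ (3-2-1) * (-2 * primA s t) * s t ^ (3-2))
      = fun t : ℝ => 2 * ((t:ℂ) * s t ^ 2) + (-8) * (s t * primA s t) := by
    funext t; norm_num; ring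
  rw [heq]
  have h1 : IntervalIntegrable (fun t : ℝ => 2 * ((t:ℂ) * s t ^ 2)) volume 0 x := by
    have := intIntSub hn hstep' (fun t : ℝ => 2 * (t:ℂ))
      (by fun_prop) 2 h0 hx
    refine this.congr ?_; intro t _; ring
  have h2 : IntervalIntegrable (fun t : ℝ => (-8 : ℂ) * (s t * primA s t)) volume 0 x := by
    have := intIntSub hn hstep' (fun t => (-8 : ℂ) * primA s t)
      (continuousOn_const.mul (primA_cont hn hstep')) 1 h0 hx
    refine this.congr ?_; intro t _; ring
  rw [intervalIntegral.integral_add h1 h2, intervalIntegral.integral_const_mul,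
    intervalIntegral.integral_const_mul, ftc_sA hn hstep' hx]
  rw [primB]
  ring

lemma g4_rep (hn : 1 ≤ n)
    (hstep' : ∀ i < n, ∀ x ∈ Set.Ico ((i:ℝ)/n) ((i+1:ℝ)/n), s x = c (i+1))
    (hg1 : ∀ x : ℝ, g 1 x = 1)
    (hrec : ∀ m, 2 ≤ m → ∀ x : ℝ, g m x = -∫ t in (0:ℝ)..x,
      ∑ k ∈ Finset.Ico 1 m, (2 * k : ℂ) * (t : ℂ) ^ (m - k - 1) * g k t * (s t) ^ (m - k)) :
    g 4 1 = -2 * (∫ t in (0:ℝ)..1, (t:ℂ)^2 * s t ^ 3)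
      - 4 * (∫ t in (0:ℝ)..1, (t:ℂ) * primA s t * s t ^ 2)
      + 12 * primA s 1 * primB s 1 - 8 * primA s 1 ^ 3 := by
  have h0 : (0:ℝ) ∈ Set.Icc (0:ℝ) 1 := Set.left_mem_Icc.2 zero_le_one
  have h1' : (1:ℝ) ∈ Set.Icc (0:ℝ) 1 := Set.right_mem_Icc.2 zero_le_one
  have := hrec 4 (by norm_num) 1
  rw [this]
  have he : Finset.Ico 1 4 = ({1, 2, 3} : Finset ℕ) := rfl
  simp only [he, Finset.sum_insert (by decide : (1:ℕ) ∉ ({2,3}:Finset ℕ)),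
    Finset.sum_insert (by decide : (2:ℕ) ∉ ({3}:Finset ℕ)), Finset.sum_singleton,
    hg1, g2_rep hg1 hrec]
  have hcongr : ∫ t in (0:ℝ)..1, ((2 * (1:ℕ) : ℂ) * (t:ℂ) ^ (4-1-1) * 1 * s t ^ (4-1)
      + ((2 * (2:ℕ) : ℂ) * (t:ℂ) ^ (4-2-1) * (-2 * primA s t) * s t ^ (4-2)
      + (2 * (3:ℕ) : ℂ) * (t:ℂ) ^ (4-3-1) * g 3 t * s t ^ (4-3)))
      = ∫ t in (0:ℝ)..1, ((2 * ((t:ℂ)^2 * s t ^ 3) + (-8) * ((t:ℂ) * primA s t * s t ^ 2))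
      + ((-12) * (s t * primB s t) + 24 * (s t * primA s t ^ 2))) := by
    refine intervalIntegral.integral_congr ?_
    intro t htm
    rw [Set.uIcc_of_le zero_le_one] at htm
    have h3 := g3_rep hn hstep' hg1 hrec htm
    simp only [h3]
    norm_num
    ring
  rw [hcongr]
  have hf1 : IntervalIntegrable (fun t : ℝ => 2 * ((t:ℂ)^2 * s t ^ 3)) volume 0 1 := by
    have := intIntSub hn hstep' (fun t : ℝ => 2 * (t:ℂ)^2) (by fun_prop) 3 h0 h1'
    refine this.congr ?_; intro t _; ring
  have hf2 : IntervalIntegrable (fun t : ℝ => (-8:ℂ) * ((t:ℂ) * primA s t * s t ^ 2)) volume 0 1 := by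
    have := intIntSub hn hstep' (fun t : ℝ => (-8:ℂ) * ((t:ℂ) * primA s t))
      (continuousOn_const.mul (Complex.continuous_ofReal.continuousOn.mul (primA_cont hn hstep'))) 2 h0 h1'
    refine this.congr ?_; intro t _; ring
  have hf3 : IntervalIntegrable (fun t : ℝ => (-12:ℂ) * (s t * primB s t)) volume 0 1 := by
    have := intIntSub hn hstep' (fun t : ℝ => (-12:ℂ) * primB s t)
      (continuousOn_const.mul (primB_cont hn hstep')) 1 h0 h1'
    refine this.congr ?_; intro t _; ring
  have hf4 : IntervalIntegrable (fun t : ℝ => (24:ℂ) * (s t * primA s t ^ 2)) volume 0 1 := by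
    have := intIntSub hn hstep' (fun t : ℝ => (24:ℂ) * primA s t ^ 2)
      (continuousOn_const.mul ((primA_cont hn hstep').pow 2)) 1 h0 h1'
    refine this.congr ?_; intro t _; ring
  rw [intervalIntegral.integral_add (hf1.add hf2) (hf3.add hf4),
    intervalIntegral.integral_add hf1 hf2, intervalIntegral.integral_add hf3 hf4,
    intervalIntegral.integral_const_mul, intervalIntegral.integral_const_mul,
    intervalIntegral.integral_const_mul, intervalIntegral.integral_const_mul,
    ftc_sA2 hn hstep']
  have hsB : ∫ t in (0:ℝ)..1, s t * primB s t
      = primA s 1 * primB s 1 - ∫ t in (0:ℝ)..1, (t:ℂ) * primA s t * s t ^ 2 := by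
    have hAB := ftc_AB hn hstep'
    have hb : IntervalIntegrable (fun t : ℝ => s t * primB s t) volume 0 1 := by
      have := intIntSub hn hstep' (primB s) (primB_cont hn hstep') 1 h0 h1'
      refine this.congr ?_; intro t _; ring
    have hd : IntervalIntegrable (fun t : ℝ => (t:ℂ) * s t ^ 2 * primA s t) volume 0 1 := by
      have := intIntSub hn hstep' (fun t : ℝ => (t:ℂ) * primA s t)
        (Complex.continuous_ofReal.continuousOn.mul (primA_cont hn hstep')) 2 h0 h1'
      refine this.congr ?_; intro t _; ring
    rw [intervalIntegral.integral_add hb hd] at hAB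
    have hdd : ∫ t in (0:ℝ)..1, (t:ℂ) * s t ^ 2 * primA s t
        = ∫ t in (0:ℝ)..1, (t:ℂ) * primA s t * s t ^ 2 := by
      refine intervalIntegral.integral_congr ?_
      intro t _; ring
    rw [hdd] at hAB
    linear_combination hAB
  rw [hsB]
  ring
end G
end G
lemma Alin (hn : 1 ≤ n)
    (hstep' : ∀ i < n, ∀ x ∈ Set.Ico ((i:ℝ)/n) ((i+1:ℝ)/n), s x = c (i+1))
    {i : ℕ} (hi : i < n) {t : ℝ} (ht : t ∈ Set.Icc ((i:ℝ)/n) ((i+1:ℝ)/n)) :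
    primA s t = primA s ((i:ℝ)/n) + c (i+1) * ((t:ℂ) - (((i:ℝ)/n : ℝ) : ℂ)) := by
  have h0 : (0:ℝ) ∈ Set.Icc (0:ℝ) 1 := Set.left_mem_Icc.2 zero_le_one
  have him : ((i:ℝ)/n) ∈ Set.Icc (0:ℝ) 1 := grid_mem hn (le_of_lt hi)
  have him1 : ((i+1:ℝ)/n) ∈ Set.Icc (0:ℝ) 1 := by
    have := grid_mem hn (Nat.succ_le_of_lt hi); push_cast at this ⊢; exact this
  have htm : t ∈ Set.Icc (0:ℝ) 1 := ⟨le_trans him.1 ht.1, le_trans ht.2 him1.2⟩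
  have hsub : ∫ u in ((i:ℝ)/n)..t, s u = primA s t - primA s ((i:ℝ)/n) := by
    rw [primA, primA, ← integral_interval_sub_left (sInt hn hstep' h0 htm)
      (sInt hn hstep' h0 him)]
  have hconst : ∫ u in ((i:ℝ)/n)..t, s u = (t - (i:ℝ)/n) • c (i+1) := by
    rw [intervalIntegral.integral_congr_ae ?_, intervalIntegral.integral_const]
    have := step_ae_imp hstep' hi ht.2
    filter_upwards [this] with x hx hxm
    rw [Set.uIoc_of_le ht.1] at hxm
    exact hx hxm
  rw [hconst, Complex.real_smul] at hsub
  push_cast at hsub ⊢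
  linear_combination -hsub

lemma Akey (hn : 1 ≤ n) (hc0 : c 0 = 0)
    (hstep' : ∀ i < n, ∀ x ∈ Set.Ico ((i:ℝ)/n) ((i+1:ℝ)/n), s x = c (i+1)) :
    ∀ j ≤ n, primA s ((j:ℝ)/n) = (∑ i ∈ Finset.range (j+1), c i)/(n:ℂ) := by
  intro j hj
  induction j with
  | zero => norm_num [primA, hc0]
  | succ i ih =>
    have hi : i < n := hj
    have hprev := ih (le_of_lt hi)
    have hlin := Alin hn hstep' hi (Set.right_mem_Icc.2 (grid_le hn i))
    have hcast : (((i:ℕ)+1:ℕ):ℝ) = (i:ℝ)+1 := by push_cast; ring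
    rw [hcast, hlin, hprev, Finset.sum_range_succ]
    have hn' : (0:ℝ) < n := by positivity
    have hnC : ((n:ℕ):ℂ) ≠ 0 := Nat.cast_ne_zero.mpr (by omega)
    push_cast
    field_simp
    rw [Finset.sum_range_succ, Finset.sum_range_succ (n := i)]
    ring

lemma Cpiece (hn : 1 ≤ n)
    (hstep' : ∀ i < n, ∀ x ∈ Set.Ico ((i:ℝ)/n) ((i+1:ℝ)/n), s x = c (i+1))
    {i : ℕ} (hi : i < n) :
    ∫ t in ((i:ℝ)/n)..((i+1:ℝ)/n), (t:ℂ)^2 * s t ^ 3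
      = c (i+1)^3 * (((((i:ℝ)+1)/n : ℝ) : ℂ)^3 - (((i:ℝ)/n : ℝ) : ℂ)^3)/3 := by
  have hle := grid_le hn i
  have hcongr : ∫ t in ((i:ℝ)/n)..((i+1:ℝ)/n), (t:ℂ)^2 * s t ^ 3
      = ∫ t in ((i:ℝ)/n)..((i+1:ℝ)/n), ((0:ℂ) + 0*(t:ℂ) + c (i+1)^3 * (t:ℂ)^2) := by
    refine intervalIntegral.integral_congr_ae ?_
    filter_upwards [step_ae_imp hstep' hi (le_refl _)] with x hx hxm
    rw [Set.uIoc_of_le hle] at hxm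
    rw [hx hxm]; ring
  rw [hcongr, integral_cpoly]
  ring

lemma Dpiece (hn : 1 ≤ n)
    (hstep' : ∀ i < n, ∀ x ∈ Set.Ico ((i:ℝ)/n) ((i+1:ℝ)/n), s x = c (i+1))
    {i : ℕ} (hi : i < n) :
    ∫ t in ((i:ℝ)/n)..((i+1:ℝ)/n), (t:ℂ) * primA s t * s t ^ 2
      = (primA s ((i:ℝ)/n) - c (i+1) * (((i:ℝ)/n : ℝ) : ℂ)) * c (i+1)^2
          * (((((i:ℝ)+1)/n : ℝ) : ℂ)^2 - (((i:ℝ)/n : ℝ) : ℂ)^2)/2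
        + c (i+1)^3 * (((((i:ℝ)+1)/n : ℝ) : ℂ)^3 - (((i:ℝ)/n : ℝ) : ℂ)^3)/3 := by
  have hle := grid_le hn i
  set α := primA s ((i:ℝ)/n)
  set β : ℂ := (((i:ℝ)/n : ℝ) : ℂ)
  have hcongr : ∫ t in ((i:ℝ)/n)..((i+1:ℝ)/n), (t:ℂ) * primA s t * s t ^ 2
      = ∫ t in ((i:ℝ)/n)..((i+1:ℝ)/n), ((0:ℂ) + (α - c (i+1)*β)*c (i+1)^2 * (t:ℂ) + c (i+1)^3 * (t:ℂ)^2) := by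
    refine intervalIntegral.integral_congr_ae ?_
    filter_upwards [step_ae_imp hstep' hi (le_refl _)] with x hx hxm
    rw [Set.uIoc_of_le hle] at hxm
    have hxIcc : x ∈ Set.Icc ((i:ℝ)/n) ((i+1:ℝ)/n) := ⟨le_of_lt hxm.1, hxm.2⟩
    rw [hx hxm, Alin hn hstep' hi hxIcc]
    ring
  rw [hcongr, integral_cpoly]
  ring

lemma sum_CD (hn : 1 ≤ n) (hc0 : c 0 = 0)
    (hstep' : ∀ i < n, ∀ x ∈ Set.Ico ((i:ℝ)/n) ((i+1:ℝ)/n), s x = c (i+1)) :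
    2 * (∫ t in (0:ℝ)..1, (t:ℂ)^2 * s t ^ 3)
      + 4 * (∫ t in (0:ℝ)..1, (t:ℂ) * primA s t * s t ^ 2)
    = (2/(n:ℂ)^3) * ∑ k ∈ Finset.Icc 1 n,
        (c k)^2 * ((k:ℂ)^2 * c k + (2*(k:ℂ)-1) * ∑ j ∈ Finset.range k, c j) := by
  have hn' : (0:ℝ) < n := by positivity
  have ha0 : ((0:ℕ):ℝ)/(n:ℝ) = 0 := by norm_num
  have han : ((n:ℕ):ℝ)/(n:ℝ) = 1 := div_self (ne_of_gt hn')
  have hacast : ∀ k : ℕ, ((k+1:ℕ):ℝ)/(n:ℝ) = ((k:ℝ)+1)/n := by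
    intro k; push_cast; ring
  -- C split
  have hC : ∫ t in (0:ℝ)..1, (t:ℂ)^2 * s t ^ 3
      = ∑ i ∈ Finset.range n,
          c (i+1)^3 * (((((i:ℝ)+1)/n : ℝ) : ℂ)^3 - (((i:ℝ)/n : ℝ) : ℂ)^3)/3 := by
    have hint : ∀ k < n, IntervalIntegrable (fun t => (t:ℂ)^2 * s t ^ 3) volume
        ((k:ℝ)/n) (((k+1:ℕ):ℝ)/n) := by
      intro k hk
      exact intIntSub hn hstep' (fun t => (t:ℂ)^2)
        (by fun_prop) 3 (grid_mem hn (le_of_lt hk)) (grid_mem hn hk)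
    have := intervalIntegral.sum_integral_adjacent_intervals (a := fun k : ℕ => (k:ℝ)/n)
      (μ := volume) (f := fun t => (t:ℂ)^2 * s t ^ 3) hint
    simp only [Nat.cast_zero, zero_div, han] at this
    rw [← this]
    refine Finset.sum_congr rfl ?_
    intro i hi
    rw [hacast i, Cpiece hn hstep' (Finset.mem_range.1 hi)]
  -- D split
  have hD : ∫ t in (0:ℝ)..1, (t:ℂ) * primA s t * s t ^ 2
      = ∑ i ∈ Finset.range n,
          ((primA s ((i:ℝ)/n) - c (i+1) * (((i:ℝ)/n : ℝ) : ℂ)) * c (i+1)^2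
            * (((((i:ℝ)+1)/n : ℝ) : ℂ)^2 - (((i:ℝ)/n : ℝ) : ℂ)^2)/2
          + c (i+1)^3 * (((((i:ℝ)+1)/n : ℝ) : ℂ)^3 - (((i:ℝ)/n : ℝ) : ℂ)^3)/3) := by
    have hint : ∀ k < n, IntervalIntegrable (fun t => (t:ℂ) * primA s t * s t ^ 2) volume
        ((k:ℝ)/n) (((k+1:ℕ):ℝ)/n) := by
      intro k hk
      have := intIntSub hn hstep' (fun t => (t:ℂ) * primA s t)
        (Complex.continuous_ofReal.continuousOn.mul (primA_cont hn hstep')) 2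
        (grid_mem hn (le_of_lt hk)) (grid_mem hn hk)
      exact this
    have := intervalIntegral.sum_integral_adjacent_intervals (a := fun k : ℕ => (k:ℝ)/n)
      (μ := volume) (f := fun t => (t:ℂ) * primA s t * s t ^ 2) hint
    simp only [Nat.cast_zero, zero_div, han] at this
    rw [← this]
    refine Finset.sum_congr rfl ?_
    intro i hi
    rw [hacast i, Dpiece hn hstep' (Finset.mem_range.1 hi)]
  rw [hC, hD, Finset.mul_sum, Finset.mul_sum, ← Finset.sum_add_distrib]
  rw [show Finset.Icc 1 n = Finset.Ico 1 (n+1) from (Finset.Ico_add_one_right_eq_Icc 1 n).symm,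
    Finset.sum_Ico_eq_sum_range]
  simp only [Nat.add_sub_cancel]
  rw [Finset.mul_sum]
  refine Finset.sum_congr rfl ?_
  intro i hi
  have hiR : i < n := Finset.mem_range.1 hi
  rw [Akey hn hc0 hstep' i (le_of_lt hiR)]
  have hnC : ((n:ℕ):ℂ) ≠ 0 := Nat.cast_ne_zero.mpr (by omega)
  have h1i : 1 + i = i + 1 := by omega
  rw [h1i]
  push_cast
  simp only [div_eq_mul_inv, ← inv_pow]
  ring
end SchlichtStepAux

/-- **Lemma 1, formula (20).** If the step function `s ∈ T_n([0,1])` with values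
`c_1, …, c_n` (and `c_0 = 0`) generates the schlicht function `f`, then
`a_4 = 3a_2a_3 - 2a_2³ - (2/n³) ∑_{k=1}^n c_k² (k² c_k + (2k-1) ∑_{j=0}^{k-1} c_j)`. -/
theorem fourth_coeff_of_step (n : ℕ) (hn : 1 ≤ n) (c : ℕ → ℂ) (hc0 : c 0 = 0)
    (hc : ∀ k, 1 ≤ k → k ≤ n → ‖c k‖ = 1)
    (s : ℝ → ℂ)
    (hstep : ∀ k, 1 ≤ k → k ≤ n → ∀ x : ℝ, ((k : ℝ) - 1) / n ≤ x → x < (k : ℝ) / n → s x = c k)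
    (hs1 : s 1 = c n)
    (f : ℂ → ℂ) (hf : Schlicht f) (hgen : IsGeneratingFn s f) :
    taylorCoeff f 4 = 3 * taylorCoeff f 2 * taylorCoeff f 3 - 2 * (taylorCoeff f 2) ^ 3 -
      (2 / (n : ℂ) ^ 3) * ∑ k ∈ Finset.Icc 1 n,
        (c k) ^ 2 * ((k : ℂ) ^ 2 * c k + (2 * (k : ℂ) - 1) * ∑ j ∈ Finset.range k, c j) := by
  classical
  obtain ⟨hmeas, hmod, g, ⟨hg1, hrec⟩, hcoeff⟩ := hgen
  have hstep' : ∀ i < n, ∀ x ∈ Set.Ico ((i:ℝ)/n) ((i+1:ℝ)/n), s x = c (i+1) := by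
    intro i hi x hx
    refine hstep (i+1) (by omega) (by omega) x ?_ ?_
    · have he : (((i+1:ℕ)):ℝ) - 1 = (i:ℝ) := by push_cast; ring
      rw [he]; exact hx.1
    · have he : (((i+1:ℕ)):ℝ) = (i:ℝ) + 1 := by push_cast; ring
      rw [he]; exact hx.2
  have e2 : taylorCoeff f 2 = -2 * SchlichtStepAux.primA s 1 := by
    rw [← hcoeff 2 le_rfl]
    exact SchlichtStepAux.g2_rep hg1 hrec 1
  have e3 : taylorCoeff f 3 = -2 * SchlichtStepAux.primB s 1 + 4 * SchlichtStepAux.primA s 1 ^ 2 := by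
    rw [← hcoeff 3 (by norm_num)]
    exact SchlichtStepAux.g3_rep hn hstep' hg1 hrec (Set.right_mem_Icc.2 zero_le_one)
  have e4 : taylorCoeff f 4 = -2 * (∫ t in (0:ℝ)..1, (t:ℂ)^2 * s t ^ 3)
      - 4 * (∫ t in (0:ℝ)..1, (t:ℂ) * SchlichtStepAux.primA s t * s t ^ 2)
      + 12 * SchlichtStepAux.primA s 1 * SchlichtStepAux.primB s 1
      - 8 * SchlichtStepAux.primA s 1 ^ 3 := by
    rw [← hcoeff 4 (by norm_num)]
    exact SchlichtStepAux.g4_rep hn hstep' hg1 hrec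
  have hsum := SchlichtStepAux.sum_CD hn hc0 hstep'
  rw [e2, e3, e4]
  linear_combination -hsum

end
end

section
/- Let μ : (0,1] → ℂ be measurable with |μ(t)| = 1 for all t, and let g_2, g_3, g_4 be defined by g_2(x) = -∫_0^x 2 μ(t) dt, g_3(x) = -∫_0^x (2 t μ(t)^2 + 4 g_2(t) μ(t)) dt, and g_4(x) = -∫_0^x (2 t^2 μ(t)^3 + 4 t g_2(t) μ(t)^2 + 6 g_3(t) μ(t)) dt. Then g_4(1) = 3 g_2(1) g_3(1) - 2 g_2(1)^3 + ∫_0^1 ( -2 t^2 μ(t)^3 + 2 t g_2(t) μ(t)^2 ) dt. -/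
open MeasureTheory Filter Topology

noncomputable section

open Set

lemma norm_primitive_le' {g : ℝ → ℂ} (hg : Integrable g) (t : ℝ) :
    ‖∫ s in (0:ℝ)..t, g s‖ ≤ ∫ s, ‖g s‖ := by
  rcases le_total (0:ℝ) t with h | h
  · rw [intervalIntegral.integral_of_le h]
    exact (norm_integral_le_integral_norm _).trans
      (setIntegral_le_integral hg.norm (Filter.Eventually.of_forall fun x => norm_nonneg _))
  · rw [intervalIntegral.integral_of_ge h, norm_neg]
    exact (norm_integral_le_integral_norm _).trans
      (setIntegral_le_integral hg.norm (Filter.Eventually.of_forall fun x => norm_nonneg _))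

lemma parts' {f g : ℝ → ℂ} (hf : Integrable f) (hg : Integrable g) {b : ℝ} (hb : 0 ≤ b) :
    (∫ t in (0:ℝ)..b, f t) * (∫ t in (0:ℝ)..b, g t)
      = ∫ t in (0:ℝ)..b, (f t * (∫ s in (0:ℝ)..t, g s) + (∫ s in (0:ℝ)..t, f s) * g t) := by
  have hfc : Continuous fun t => ∫ s in (0:ℝ)..t, f s :=
    intervalIntegral.continuous_primitive (fun a b => hf.intervalIntegrable) 0
  have hgc : Continuous fun t => ∫ s in (0:ℝ)..t, g s :=
    intervalIntegral.continuous_primitive (fun a b => hg.intervalIntegrable) 0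
  rw [intervalIntegral.integral_of_le hb, intervalIntegral.integral_of_le hb,
      intervalIntegral.integral_of_le hb]
  set ν := volume.restrict (Set.Ioc (0:ℝ) b) with hν
  have hfν : Integrable f ν := hf.restrict
  have hgν : Integrable g ν := hg.restrict
  have hprod : Integrable (fun p : ℝ × ℝ => f p.1 * g p.2) (ν.prod ν) := hfν.mul_prod hgν
  have hA : MeasurableSet {p : ℝ × ℝ | p.1 < p.2} :=
    measurableSet_lt measurable_fst measurable_snd
  have key : (∫ t in Set.Ioc (0:ℝ) b, f t) * (∫ t in Set.Ioc (0:ℝ) b, g t)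
      = ∫ p, f p.1 * g p.2 ∂(ν.prod ν) := (integral_prod_mul f g).symm
  have hsplit : (∫ p in {p : ℝ × ℝ | p.1 < p.2}, f p.1 * g p.2 ∂(ν.prod ν))
      + (∫ p in {p : ℝ × ℝ | p.1 < p.2}ᶜ, f p.1 * g p.2 ∂(ν.prod ν))
      = ∫ p, f p.1 * g p.2 ∂(ν.prod ν) := integral_add_compl hA hprod
  have cA : (∫ p in {p : ℝ × ℝ | p.1 < p.2}, f p.1 * g p.2 ∂(ν.prod ν))
      = ∫ t in Set.Ioc (0:ℝ) b, (∫ s in (0:ℝ)..t, f s) * g t := by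
    rw [← integral_indicator hA, integral_prod_symm _ (hprod.indicator hA)]
    refine setIntegral_congr_fun measurableSet_Ioc fun t ht => ?_
    have h1 : (fun s => Set.indicator {p : ℝ × ℝ | p.1 < p.2}
        (fun p : ℝ × ℝ => f p.1 * g p.2) (s, t))
        = Set.indicator (Set.Iio t) (fun s => f s * g t) := by
      funext s
      by_cases hst : s < t <;> simp [Set.indicator, hst]
    rw [h1, integral_indicator measurableSet_Iio, hν,
        Measure.restrict_restrict measurableSet_Iio]
    have h2 : Set.Iio t ∩ Set.Ioc 0 b = Set.Ioo 0 t := by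
      ext x
      simp only [Set.mem_inter_iff, Set.mem_Iio, Set.mem_Ioc, Set.mem_Ioo]
      constructor
      · rintro ⟨h₁, h₂, h₃⟩; exact ⟨h₂, h₁⟩
      · rintro ⟨h₁, h₂⟩; exact ⟨h₂, h₁, le_trans (le_of_lt h₂) ht.2⟩
    rw [h2, integral_mul_const, ← integral_Ioc_eq_integral_Ioo,
        ← intervalIntegral.integral_of_le (le_of_lt ht.1)]
  have cAc : (∫ p in {p : ℝ × ℝ | p.1 < p.2}ᶜ, f p.1 * g p.2 ∂(ν.prod ν))
      = ∫ s in Set.Ioc (0:ℝ) b, f s * ∫ t in (0:ℝ)..s, g t := by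
    rw [← integral_indicator hA.compl, integral_prod _ (hprod.indicator hA.compl)]
    refine setIntegral_congr_fun measurableSet_Ioc fun s hs => ?_
    have h1 : (fun t => Set.indicator ({p : ℝ × ℝ | p.1 < p.2}ᶜ)
        (fun p : ℝ × ℝ => f p.1 * g p.2) (s, t))
        = Set.indicator (Set.Iic s) (fun t => f s * g t) := by
      funext t
      by_cases hst : t ≤ s <;> simp [Set.indicator, hst, not_lt.mpr, lt_of_not_ge]
    rw [h1, integral_indicator measurableSet_Iic, hν,
        Measure.restrict_restrict measurableSet_Iic]
    have h2 : Set.Iic s ∩ Set.Ioc 0 b = Set.Ioc 0 s := by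
      ext x
      simp only [Set.mem_inter_iff, Set.mem_Iic, Set.mem_Ioc]
      constructor
      · rintro ⟨h₁, h₂, h₃⟩; exact ⟨h₂, h₁⟩
      · rintro ⟨h₁, h₂⟩; exact ⟨h₂, h₁, le_trans h₂ hs.2⟩
    rw [h2, integral_const_mul, ← intervalIntegral.integral_of_le (le_of_lt hs.1)]
  have hint1 : Integrable (fun t => f t * ∫ s in (0:ℝ)..t, g s) ν := by
    have h := hfν.bdd_mul (c := ∫ s, ‖g s‖) hgc.aestronglyMeasurable.restrict
      (Filter.Eventually.of_forall fun t => norm_primitive_le' hg t)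
    simpa [mul_comm] using h
  have hint2 : Integrable (fun t => (∫ s in (0:ℝ)..t, f s) * g t) ν :=
    hgν.bdd_mul (c := ∫ s, ‖f s‖) hfc.aestronglyMeasurable.restrict
      (Filter.Eventually.of_forall fun t => norm_primitive_le' hf t)
  calc (∫ t in Set.Ioc (0:ℝ) b, f t) * (∫ t in Set.Ioc (0:ℝ) b, g t)
      = ∫ p, f p.1 * g p.2 ∂(ν.prod ν) := key
    _ = (∫ p in {p : ℝ × ℝ | p.1 < p.2}, f p.1 * g p.2 ∂(ν.prod ν))
        + (∫ p in {p : ℝ × ℝ | p.1 < p.2}ᶜ, f p.1 * g p.2 ∂(ν.prod ν)) := hsplit.symm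
    _ = (∫ t in Set.Ioc (0:ℝ) b, (∫ s in (0:ℝ)..t, f s) * g t)
        + ∫ t in Set.Ioc (0:ℝ) b, f t * ∫ s in (0:ℝ)..t, g s := by rw [cA, cAc]
    _ = ∫ t in Set.Ioc (0:ℝ) b,
          (f t * (∫ s in (0:ℝ)..t, g s) + (∫ s in (0:ℝ)..t, f s) * g t) := by
        rw [integral_add hint1 hint2]; ring


/-- **Formula (23).** For a unimodular measurable driving function `μ` on `(0,1]`, with
`g_2, g_3, g_4` given by the Löwner recursion, one has
`g_4(1) = 3g_2(1)g_3(1) - 2g_2(1)³ + ∫₀¹ (-2t²μ(t)³ + 2tg_2(t)μ(t)²) dt`. -/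
theorem g4_identity (μ : ℝ → ℂ)
    (hmeas : AEMeasurable μ (volume.restrict (Set.Ioc (0:ℝ) 1)))
    (hnorm : ∀ t ∈ Set.Ioc (0:ℝ) 1, ‖μ t‖ = 1)
    (g2 g3 g4 : ℝ → ℂ)
    (hg2 : ∀ x ∈ Set.Icc (0:ℝ) 1, g2 x = -∫ t in (0:ℝ)..x, 2 * μ t)
    (hg3 : ∀ x ∈ Set.Icc (0:ℝ) 1,
      g3 x = -∫ t in (0:ℝ)..x, (2 * (t : ℂ) * (μ t) ^ 2 + 4 * g2 t * μ t))
    (hg4 : ∀ x ∈ Set.Icc (0:ℝ) 1,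
      g4 x = -∫ t in (0:ℝ)..x,
        (2 * (t : ℂ) ^ 2 * (μ t) ^ 3 + 4 * (t : ℂ) * g2 t * (μ t) ^ 2 + 6 * g3 t * μ t)) :
    g4 1 = 3 * g2 1 * g3 1 - 2 * (g2 1) ^ 3 +
      ∫ t in (0:ℝ)..1, (-(2 * (t : ℂ) ^ 2 * (μ t) ^ 3) + 2 * (t : ℂ) * g2 t * (μ t) ^ 2) := by
  have h1mem : (1:ℝ) ∈ Set.Icc (0:ℝ) 1 := ⟨zero_le_one, le_refl 1⟩
  have hμs : AEStronglyMeasurable μ (volume.restrict (Set.Ioc (0:ℝ) 1)) :=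
    hmeas.aestronglyMeasurable
  have hμ2 : AEStronglyMeasurable (fun t => μ t ^ 2) (volume.restrict (Set.Ioc (0:ℝ) 1)) := by
    simpa [sq, Pi.mul_def] using hμs.mul hμs
  have hμ3 : AEStronglyMeasurable (fun t => μ t ^ 3) (volume.restrict (Set.Ioc (0:ℝ) 1)) := by
    simpa [pow_succ, Pi.mul_def] using hμ2.mul hμs
  have hcoe : AEStronglyMeasurable (fun t : ℝ => (t : ℂ)) (volume.restrict (Set.Ioc (0:ℝ) 1)) :=
    Complex.continuous_ofReal.aestronglyMeasurable.restrict
  have hcoe2 : AEStronglyMeasurable (fun t : ℝ => (t : ℂ) ^ 2)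
      (volume.restrict (Set.Ioc (0:ℝ) 1)) := by
    simpa [sq, Pi.mul_def] using hcoe.mul hcoe
  have habs : ∀ t ∈ Set.Ioc (0:ℝ) 1, ‖(t:ℂ)‖ ≤ 1 := by
    intro t ht
    rw [Complex.norm_real, Real.norm_eq_abs, abs_of_pos ht.1]
    exact ht.2
  -- bound for g2
  have hg2b : ∀ t ∈ Set.Ioc (0:ℝ) 1, ‖g2 t‖ ≤ 2 := by
    intro t ht
    rw [hg2 t ⟨ht.1.le, ht.2⟩, norm_neg]
    have := intervalIntegral.norm_integral_le_of_norm_le_const (a := 0) (b := t) (C := 2)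
      (f := fun s => 2 * μ s) ?_
    · calc ‖∫ s in (0:ℝ)..t, 2 * μ s‖ ≤ 2 * |t - 0| := this
        _ ≤ 2 := by rw [sub_zero, abs_of_pos ht.1]; linarith [ht.2]
    · intro x hx
      rw [uIoc_of_le ht.1.le] at hx
      have hx1 : x ∈ Set.Ioc (0:ℝ) 1 := ⟨hx.1, hx.2.trans ht.2⟩
      rw [norm_mul, hnorm x hx1]
      simp
  -- pointwise bound for the g3 integrand
  have hq3bnd : ∀ x ∈ Set.Ioc (0:ℝ) 1, ‖2 * (x:ℂ) * μ x ^ 2 + 4 * g2 x * μ x‖ ≤ 10 := by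
    intro x hx1
    refine (norm_add_le _ _).trans ?_
    have e1 : ‖2 * (x:ℂ) * μ x ^ 2‖ ≤ 2 := by
      rw [norm_mul, norm_mul, norm_pow, hnorm x hx1]
      have := habs x hx1
      simp only [Complex.norm_ofNat, one_pow, mul_one]
      nlinarith [norm_nonneg (x:ℂ)]
    have e2 : ‖4 * g2 x * μ x‖ ≤ 8 := by
      rw [norm_mul, norm_mul, hnorm x hx1]
      have := hg2b x hx1
      simp only [Complex.norm_ofNat, mul_one]
      nlinarith [norm_nonneg (g2 x)]
    linarith
  -- bound for g3
  have hg3b : ∀ t ∈ Set.Ioc (0:ℝ) 1, ‖g3 t‖ ≤ 10 := by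
    intro t ht
    rw [hg3 t ⟨ht.1.le, ht.2⟩, norm_neg]
    have := intervalIntegral.norm_integral_le_of_norm_le_const (a := 0) (b := t) (C := 10)
      (f := fun s => 2 * (s:ℂ) * μ s ^ 2 + 4 * g2 s * μ s) ?_
    · calc ‖∫ s in (0:ℝ)..t, (2 * (s:ℂ) * μ s ^ 2 + 4 * g2 s * μ s)‖ ≤ 10 * |t - 0| := this
        _ ≤ 10 := by rw [sub_zero, abs_of_pos ht.1]; linarith [ht.2]
    · intro x hx
      rw [uIoc_of_le ht.1.le] at hx
      exact hq3bnd x ⟨hx.1, hx.2.trans ht.2⟩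
  -- integrability of μ
  have hμint : IntegrableOn μ (Set.Ioc (0:ℝ) 1) volume := by
    refine Integrable.mono' (integrable_const (1:ℝ)) hμs ?_
    exact (ae_restrict_iff' measurableSet_Ioc).2
      (Filter.Eventually.of_forall fun t ht => le_of_eq (hnorm t ht))
  -- the indicator integrands
  have h2core : IntegrableOn (fun t => -(2 * μ t)) (Set.Ioc (0:ℝ) 1) volume :=
    (hμint.const_mul 2).neg
  set f2 : ℝ → ℂ := (Set.Ioc (0:ℝ) 1).indicator (fun t => -(2 * μ t)) with hf2def
  have hf2 : Integrable f2 volume := h2core.integrable_indicator measurableSet_Ioc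
  set f3 : ℝ → ℂ := (Set.Ioc (0:ℝ) 1).indicator
    (fun t : ℝ => -(2 * (t:ℂ) * μ t ^ 2 + 4 * g2 t * μ t)) with hf3def
  set f4 : ℝ → ℂ := (Set.Ioc (0:ℝ) 1).indicator
    (fun t : ℝ => -(2 * (t:ℂ) ^ 2 * μ t ^ 3 + 4 * (t:ℂ) * g2 t * μ t ^ 2 + 6 * g3 t * μ t))
    with hf4def
  -- primitive identity for g2
  have hP2 : ∀ x ∈ Set.Icc (0:ℝ) 1, g2 x = ∫ t in (0:ℝ)..x, f2 t := by
    intro x hx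
    rw [hg2 x hx, ← intervalIntegral.integral_neg, intervalIntegral.integral_of_le hx.1,
        intervalIntegral.integral_of_le hx.1]
    refine setIntegral_congr_fun measurableSet_Ioc fun t ht => ?_
    symm; apply Set.indicator_of_mem; exact ⟨ht.1, ht.2.trans hx.2⟩
  -- g2 is a.e. strongly measurable on (0,1]
  have hg2m : AEStronglyMeasurable g2 (volume.restrict (Set.Ioc (0:ℝ) 1)) := by
    have hc : Continuous fun t => ∫ s in (0:ℝ)..t, f2 s :=
      intervalIntegral.continuous_primitive (fun a b => hf2.intervalIntegrable) 0
    refine hc.aestronglyMeasurable.restrict.congr ?_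
    refine (ae_restrict_iff' measurableSet_Ioc).2 (Filter.Eventually.of_forall fun t ht => ?_)
    exact (hP2 t ⟨ht.1.le, ht.2⟩).symm
  have h3core : IntegrableOn (fun t : ℝ => -(2 * (t:ℂ) * μ t ^ 2 + 4 * g2 t * μ t))
      (Set.Ioc (0:ℝ) 1) volume := by
    refine Integrable.mono' (integrable_const (10:ℝ)) ?_ ?_
    · exact (((hcoe.const_mul 2).mul hμ2).add ((hg2m.const_mul 4).mul hμs)).neg
    · refine (ae_restrict_iff' measurableSet_Ioc).2
        (Filter.Eventually.of_forall fun t ht => ?_)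
      rw [norm_neg]; exact hq3bnd t ht
  have hf3 : Integrable f3 volume := h3core.integrable_indicator measurableSet_Ioc
  -- primitive identity for g3
  have hP3 : ∀ x ∈ Set.Icc (0:ℝ) 1, g3 x = ∫ t in (0:ℝ)..x, f3 t := by
    intro x hx
    rw [hg3 x hx, ← intervalIntegral.integral_neg, intervalIntegral.integral_of_le hx.1,
        intervalIntegral.integral_of_le hx.1]
    refine setIntegral_congr_fun measurableSet_Ioc fun t ht => ?_
    symm; apply Set.indicator_of_mem; exact ⟨ht.1, ht.2.trans hx.2⟩
  have hg3m : AEStronglyMeasurable g3 (volume.restrict (Set.Ioc (0:ℝ) 1)) := by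
    have hc : Continuous fun t => ∫ s in (0:ℝ)..t, f3 s :=
      intervalIntegral.continuous_primitive (fun a b => hf3.intervalIntegrable) 0
    refine hc.aestronglyMeasurable.restrict.congr ?_
    refine (ae_restrict_iff' measurableSet_Ioc).2 (Filter.Eventually.of_forall fun t ht => ?_)
    exact (hP3 t ⟨ht.1.le, ht.2⟩).symm
  have h4core : IntegrableOn
      (fun t : ℝ => -(2 * (t:ℂ) ^ 2 * μ t ^ 3 + 4 * (t:ℂ) * g2 t * μ t ^ 2 + 6 * g3 t * μ t))
      (Set.Ioc (0:ℝ) 1) volume := by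
    refine Integrable.mono' (integrable_const (70:ℝ)) ?_ ?_
    · exact ((((hcoe2.const_mul 2).mul hμ3).add
        (((hcoe.const_mul 4).mul hg2m).mul hμ2)).add ((hg3m.const_mul 6).mul hμs)).neg
    · refine (ae_restrict_iff' measurableSet_Ioc).2
        (Filter.Eventually.of_forall fun t ht => ?_)
      rw [norm_neg]
      refine (norm_add_le _ _).trans ?_
      have b1 : ‖2 * (t:ℂ) ^ 2 * μ t ^ 3 + 4 * (t:ℂ) * g2 t * μ t ^ 2‖ ≤ 10 := by
        refine (norm_add_le _ _).trans ?_
        have e1 : ‖2 * (t:ℂ) ^ 2 * μ t ^ 3‖ ≤ 2 := by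
          rw [norm_mul, norm_mul, norm_pow, norm_pow, hnorm t ht]
          have := habs t ht
          simp only [Complex.norm_ofNat, one_pow, mul_one]
          nlinarith [norm_nonneg (t:ℂ)]
        have e2 : ‖4 * (t:ℂ) * g2 t * μ t ^ 2‖ ≤ 8 := by
          rw [norm_mul, norm_mul, norm_mul, norm_pow, hnorm t ht]
          have h1 := habs t ht
          have h2 := hg2b t ht
          simp only [Complex.norm_ofNat, one_pow, mul_one]
          nlinarith [norm_nonneg (t:ℂ), norm_nonneg (g2 t)]
        linarith
      have b2 : ‖6 * g3 t * μ t‖ ≤ 60 := by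
        rw [norm_mul, norm_mul, hnorm t ht]
        have := hg3b t ht
        simp only [Complex.norm_ofNat, mul_one]
        nlinarith [norm_nonneg (g3 t)]
      linarith
  have hf4 : Integrable f4 volume := h4core.integrable_indicator measurableSet_Ioc
  have hP4 : g4 1 = ∫ t in (0:ℝ)..1, f4 t := by
    rw [hg4 1 h1mem, ← intervalIntegral.integral_neg, intervalIntegral.integral_of_le zero_le_one,
        intervalIntegral.integral_of_le zero_le_one]
    refine setIntegral_congr_fun measurableSet_Ioc fun t ht => ?_
    symm; apply Set.indicator_of_mem; exact ht
  -- continuity of primitives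
  have hF2c : Continuous fun t => ∫ s in (0:ℝ)..t, f2 s :=
    intervalIntegral.continuous_primitive (fun a b => hf2.intervalIntegrable) 0
  have hF3c : Continuous fun t => ∫ s in (0:ℝ)..t, f3 s :=
    intervalIntegral.continuous_primitive (fun a b => hf3.intervalIntegrable) 0
  -- r = derivative-like function of g2²
  set r : ℝ → ℂ := fun t => f2 t * (∫ s in (0:ℝ)..t, f2 s) + (∫ s in (0:ℝ)..t, f2 s) * f2 t
    with hrdef
  have ha : Integrable (fun t => (∫ s in (0:ℝ)..t, f2 s) * f2 t) volume :=
    hf2.bdd_mul (c := ∫ s, ‖f2 s‖) hF2c.aestronglyMeasurable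
      (Filter.Eventually.of_forall fun t => norm_primitive_le' hf2 t)
  have hb' : Integrable (fun t => f2 t * (∫ s in (0:ℝ)..t, f2 s)) volume := by
    simpa [mul_comm] using ha
  have hr : Integrable r volume := hb'.add ha
  have hRc : Continuous fun t => ∫ s in (0:ℝ)..t, r s :=
    intervalIntegral.continuous_primitive (fun a b => hr.intervalIntegrable) 0
  have h2sq : ∀ x : ℝ, 0 ≤ x → (∫ t in (0:ℝ)..x, f2 t) ^ 2 = ∫ t in (0:ℝ)..x, r t := by
    intro x hx
    rw [sq]
    exact parts' hf2 hf2 hx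
  -- the two parts identities at 1
  have hprod : g2 1 * g3 1
      = ∫ t in (0:ℝ)..1, (f2 t * (∫ s in (0:ℝ)..t, f3 s) + (∫ s in (0:ℝ)..t, f2 s) * f3 t) := by
    rw [hP2 1 h1mem, hP3 1 h1mem]
    exact parts' hf2 hf3 zero_le_one
  have hcube : g2 1 ^ 3
      = ∫ t in (0:ℝ)..1, (f2 t * (∫ s in (0:ℝ)..t, r s) + (∫ s in (0:ℝ)..t, f2 s) * r t) := by
    have hp := parts' hf2 hr zero_le_one
    calc g2 1 ^ 3 = (∫ t in (0:ℝ)..1, f2 t) * (∫ t in (0:ℝ)..1, f2 t) ^ 2 := by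
          rw [hP2 1 h1mem]; ring
      _ = (∫ t in (0:ℝ)..1, f2 t) * ∫ t in (0:ℝ)..1, r t := by rw [h2sq 1 zero_le_one]
      _ = _ := hp
  -- integrability of the pieces of S
  have i1 : Integrable (fun t => f2 t * ∫ s in (0:ℝ)..t, f3 s) volume := by
    simpa [mul_comm] using hf2.bdd_mul (c := ∫ s, ‖f3 s‖) hF3c.aestronglyMeasurable
      (Filter.Eventually.of_forall fun t => norm_primitive_le' hf3 t)
  have i2 : Integrable (fun t => (∫ s in (0:ℝ)..t, f2 s) * f3 t) volume :=
    hf3.bdd_mul (c := ∫ s, ‖f2 s‖) hF2c.aestronglyMeasurable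
      (Filter.Eventually.of_forall fun t => norm_primitive_le' hf2 t)
  have i3 : Integrable (fun t => f2 t * ∫ s in (0:ℝ)..t, r s) volume := by
    simpa [mul_comm] using hf2.bdd_mul (c := ∫ s, ‖r s‖) hRc.aestronglyMeasurable
      (Filter.Eventually.of_forall fun t => norm_primitive_le' hr t)
  have i4 : Integrable (fun t => (∫ s in (0:ℝ)..t, f2 s) * r t) volume :=
    hr.bdd_mul (c := ∫ s, ‖f2 s‖) hF2c.aestronglyMeasurable
      (Filter.Eventually.of_forall fun t => norm_primitive_le' hf2 t)
  set S : ℝ → ℂ := fun t =>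
    3 * (f2 t * (∫ s in (0:ℝ)..t, f3 s) + (∫ s in (0:ℝ)..t, f2 s) * f3 t)
      - 2 * (f2 t * (∫ s in (0:ℝ)..t, r s) + (∫ s in (0:ℝ)..t, f2 s) * r t) with hSdef
  have iA : Integrable
      (fun t => f2 t * (∫ s in (0:ℝ)..t, f3 s) + (∫ s in (0:ℝ)..t, f2 s) * f3 t) volume :=
    i1.add i2
  have iB : Integrable
      (fun t => f2 t * (∫ s in (0:ℝ)..t, r s) + (∫ s in (0:ℝ)..t, f2 s) * r t) volume :=
    i3.add i4
  have iA3 : Integrable (fun t =>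
      3 * (f2 t * (∫ s in (0:ℝ)..t, f3 s) + (∫ s in (0:ℝ)..t, f2 s) * f3 t)) volume :=
    iA.const_mul 3
  have iB2 : Integrable (fun t =>
      2 * (f2 t * (∫ s in (0:ℝ)..t, r s) + (∫ s in (0:ℝ)..t, f2 s) * r t)) volume :=
    iB.const_mul 2
  have hS : Integrable S volume := iA3.sub iB2
  have hS1 : 3 * g2 1 * g3 1 - 2 * g2 1 ^ 3 = ∫ t in (0:ℝ)..1, S t := by
    simp only [hSdef]
    rw [intervalIntegral.integral_sub iA3.intervalIntegrable iB2.intervalIntegrable,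
      intervalIntegral.integral_const_mul, intervalIntegral.integral_const_mul,
      ← hprod, ← hcube]
    ring
  -- interval integrability of the literal final integrand
  have hwiv : IntervalIntegrable
      (fun t : ℝ => -(2 * (t:ℂ) ^ 2 * μ t ^ 3) + 2 * (t:ℂ) * g2 t * μ t ^ 2) volume 0 1 := by
    rw [intervalIntegrable_iff, uIoc_of_le zero_le_one]
    refine Integrable.mono' (integrable_const (10:ℝ)) ?_ ?_
    · exact (((hcoe2.const_mul 2).mul hμ3).neg).add (((hcoe.const_mul 2).mul hg2m).mul hμ2)
    · refine (ae_restrict_iff' measurableSet_Ioc).2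
        (Filter.Eventually.of_forall fun t ht => ?_)
      refine (norm_add_le _ _).trans ?_
      have e1 : ‖-(2 * (t:ℂ) ^ 2 * μ t ^ 3)‖ ≤ 2 := by
        rw [norm_neg, norm_mul, norm_mul, norm_pow, norm_pow, hnorm t ht]
        have := habs t ht
        simp only [Complex.norm_ofNat, one_pow, mul_one]
        nlinarith [norm_nonneg (t:ℂ)]
      have e2 : ‖2 * (t:ℂ) * g2 t * μ t ^ 2‖ ≤ 4 := by
        rw [norm_mul, norm_mul, norm_mul, norm_pow, hnorm t ht]
        have h1 := habs t ht
        have h2 := hg2b t ht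
        simp only [Complex.norm_ofNat, one_pow, mul_one]
        nlinarith [norm_nonneg (t:ℂ), norm_nonneg (g2 t)]
      linarith
  -- final assembly
  rw [hP4, hS1, ← intervalIntegral.integral_add (hS.intervalIntegrable) hwiv,
      intervalIntegral.integral_of_le zero_le_one, intervalIntegral.integral_of_le zero_le_one]
  refine setIntegral_congr_fun measurableSet_Ioc fun t ht => ?_
  have htIcc : t ∈ Set.Icc (0:ℝ) 1 := ⟨ht.1.le, ht.2⟩
  have e2 : (∫ s in (0:ℝ)..t, f2 s) = g2 t := (hP2 t htIcc).symm
  have e3 : (∫ s in (0:ℝ)..t, f3 s) = g3 t := (hP3 t htIcc).symm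
  have er : (∫ s in (0:ℝ)..t, r s) = g2 t ^ 2 := by rw [← h2sq t ht.1.le, e2]
  have hf2t : f2 t = -(2 * μ t) := by apply Set.indicator_of_mem ht
  have hf3t : f3 t = -(2 * (t:ℂ) * μ t ^ 2 + 4 * g2 t * μ t) := by
    apply Set.indicator_of_mem ht
  have hf4t : f4 t = -(2 * (t:ℂ) ^ 2 * μ t ^ 3 + 4 * (t:ℂ) * g2 t * μ t ^ 2 + 6 * g3 t * μ t) := by
    apply Set.indicator_of_mem ht
  simp only [hSdef, e2, e3, er]
  simp only [hrdef, hf2t, hf3t, hf4t, e2]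
  ring


end
end

section
/- Let κ : [0,∞) → ℂ be continuous with |κ(t)| = 1 for all t, and let γ_1, γ_2 : [0,∞) → ℂ be differentiable functions satisfying γ_1'(t) = γ_1(t) + κ(t) and γ_2'(t) = 2 γ_2(t) + 2 γ_1(t) κ(t) + κ(t)^2 for all t ≥ 0, together with e^{-t} γ_1(t) → 0 and e^{-2t} γ_2(t) → 0 as t → ∞. Then γ_1(0) = -∫_0^∞ e^{-s} κ(s) ds and γ_2(0) = γ_1(0)^2 - ∫_0^∞ e^{-2t} κ(t)^2 dt. -/
open MeasureTheory Filter Topology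

noncomputable section

private lemma cexpDeriv (c : ℂ) (t : ℝ) :
    HasDerivAt (fun t : ℝ => Complex.exp (c * t)) (c * Complex.exp (c * t)) t := by
  have h1 : HasDerivAt (fun t : ℝ => (t : ℂ)) 1 t := by
    simpa using (hasDerivAt_id t).ofReal_comp
  have h2 : HasDerivAt (fun t : ℝ => c * (t : ℂ)) c t := by
    simpa using h1.const_mul c
  simpa [mul_comm] using h2.cexp

/-- The integrated forms of the Löwner differential equations for the first and second
logarithmic coefficients: if `γ₁' = γ₁ + κ`, `γ₂' = 2γ₂ + 2γ₁κ + κ²` on `[0,∞)` with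
`e^{-t}γ₁(t) → 0` and `e^{-2t}γ₂(t) → 0`, then `γ₁(0) = -∫₀^∞ e^{-s}κ(s) ds` and
`γ₂(0) = γ₁(0)² - ∫₀^∞ e^{-2t}κ(t)² dt`. -/
theorem log_coeff_integral_form (κ γ1 γ2 : ℝ → ℂ)
    (hκc : ContinuousOn κ (Set.Ici (0:ℝ)))
    (hκn : ∀ t ∈ Set.Ici (0:ℝ), ‖κ t‖ = 1)
    (hγ1 : ∀ t ∈ Set.Ici (0:ℝ),
      HasDerivWithinAt γ1 (γ1 t + κ t) (Set.Ici (0:ℝ)) t)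
    (hγ2 : ∀ t ∈ Set.Ici (0:ℝ),
      HasDerivWithinAt γ2 (2 * γ2 t + 2 * γ1 t * κ t + (κ t) ^ 2) (Set.Ici (0:ℝ)) t)
    (hlim1 : Tendsto (fun t : ℝ => Complex.exp (-(t : ℂ)) * γ1 t) atTop (𝓝 0))
    (hlim2 : Tendsto (fun t : ℝ => Complex.exp (-2 * (t : ℂ)) * γ2 t) atTop (𝓝 0)) :
    γ1 0 = -∫ s in Set.Ioi (0:ℝ), Complex.exp (-(s : ℂ)) * κ s ∧
    γ2 0 = (γ1 0) ^ 2 - ∫ t in Set.Ioi (0:ℝ), Complex.exp (-2 * (t : ℂ)) * (κ t) ^ 2 := by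
  -- F t = e^{-t} γ1 t
  set F : ℝ → ℂ := fun t => Complex.exp (-(t : ℂ)) * γ1 t with hF_def
  have hFd : ∀ t ∈ Set.Ici (0:ℝ),
      HasDerivWithinAt F (Complex.exp (-(t:ℂ)) * κ t) (Set.Ici (0:ℝ)) t := by
    intro t ht
    have he : HasDerivAt (fun t : ℝ => Complex.exp (-(t:ℂ))) (-Complex.exp (-(t:ℂ))) t := by
      have := cexpDeriv (-1) t
      simpa [neg_mul, one_mul] using this
    have h := (he.hasDerivWithinAt).mul (hγ1 t ht)
    convert h using 1
    · rfl
    · rfl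
    ring
  -- integrability of e^{-t} κ t
  have hmeas1 : AEStronglyMeasurable (fun t : ℝ => Complex.exp (-(t:ℂ)) * κ t)
      (volume.restrict (Set.Ioi (0:ℝ))) := by
    apply ContinuousOn.aestronglyMeasurable _ measurableSet_Ioi
    exact ((Complex.continuous_exp.comp Complex.continuous_ofReal.neg).continuousOn).mul
      (hκc.mono Set.Ioi_subset_Ici_self)
  have hexpint : IntegrableOn (fun t : ℝ => Real.exp (-t)) (Set.Ioi (0:ℝ)) := by
    simpa [neg_one_mul] using exp_neg_integrableOn_Ioi (0:ℝ) (one_pos)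
  have hint1 : IntegrableOn (fun t : ℝ => Complex.exp (-(t:ℂ)) * κ t) (Set.Ioi (0:ℝ)) := by
    apply Integrable.mono' hexpint hmeas1
    filter_upwards [ae_restrict_mem measurableSet_Ioi] with t ht
    have : ‖κ t‖ = 1 := hκn t (Set.mem_Ici.mpr (le_of_lt ht))
    simp [Complex.norm_exp, this]
  have h1 : ∫ s in Set.Ioi (0:ℝ), Complex.exp (-(s:ℂ)) * κ s = 0 - F 0 :=
    integral_Ioi_of_hasDerivAt_of_tendsto (hFd 0 Set.self_mem_Ici).continuousWithinAt
      (fun x hx => (hFd x (Set.mem_Ici.mpr (le_of_lt hx))).hasDerivAt (Ici_mem_nhds hx)) hint1 hlim1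
  have hF0 : F 0 = γ1 0 := by simp [hF_def]
  have part1 : γ1 0 = -∫ s in Set.Ioi (0:ℝ), Complex.exp (-(s:ℂ)) * κ s := by
    rw [h1, hF0]; ring
  refine ⟨part1, ?_⟩
  -- P t = e^{-2t} γ2 t - (F t)^2
  set P : ℝ → ℂ := fun t => Complex.exp (-2 * (t : ℂ)) * γ2 t - F t * F t with hP_def
  have hPd : ∀ t ∈ Set.Ici (0:ℝ),
      HasDerivWithinAt P (Complex.exp (-2 * (t:ℂ)) * (κ t) ^ 2) (Set.Ici (0:ℝ)) t := by
    intro t ht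
    have he2 : HasDerivAt (fun t : ℝ => Complex.exp (-2 * (t:ℂ)))
        (-2 * Complex.exp (-2 * (t:ℂ))) t := cexpDeriv (-2) t
    have d1 := (he2.hasDerivWithinAt).mul (hγ2 t ht)
    have d2 := (hFd t ht).mul (hFd t ht)
    have h := d1.sub d2
    convert h using 1
    · rfl
    · rfl
    have hee : Complex.exp (-(t:ℂ)) * Complex.exp (-(t:ℂ)) = Complex.exp (-2 * (t:ℂ)) := by
      rw [← Complex.exp_add]; ring_nf
    simp only [hF_def]
    linear_combination (2 * γ1 t * κ t) * hee
  have hmeas2 : AEStronglyMeasurable (fun t : ℝ => Complex.exp (-2 * (t:ℂ)) * (κ t) ^ 2)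
      (volume.restrict (Set.Ioi (0:ℝ))) := by
    apply ContinuousOn.aestronglyMeasurable _ measurableSet_Ioi
    exact ((Complex.continuous_exp.comp
      (continuous_const.mul Complex.continuous_ofReal)).continuousOn).mul
      ((hκc.mono Set.Ioi_subset_Ici_self).pow 2)
  have hexpint2 : IntegrableOn (fun t : ℝ => Real.exp (-2 * t)) (Set.Ioi (0:ℝ)) :=
    exp_neg_integrableOn_Ioi (0:ℝ) (by norm_num)
  have hint2 : IntegrableOn (fun t : ℝ => Complex.exp (-2 * (t:ℂ)) * (κ t) ^ 2)
      (Set.Ioi (0:ℝ)) := by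
    apply Integrable.mono' hexpint2 hmeas2
    filter_upwards [ae_restrict_mem measurableSet_Ioi] with t ht
    have h : ‖κ t‖ = 1 := hκn t (Set.mem_Ici.mpr (le_of_lt ht))
    have : (-2 * (t:ℂ)).re = -2 * t := by simp
    simp [Complex.norm_exp, this, h]
  have hPlim : Tendsto P atTop (𝓝 0) := by
    have hsq : Tendsto (fun t : ℝ => F t * F t) atTop (𝓝 0) := by
      simpa using hlim1.mul hlim1
    simpa [hP_def, neg_mul] using hlim2.sub hsq
  have h2 : ∫ t in Set.Ioi (0:ℝ), Complex.exp (-2 * (t:ℂ)) * (κ t) ^ 2 = 0 - P 0 :=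
    integral_Ioi_of_hasDerivAt_of_tendsto (hPd 0 Set.self_mem_Ici).continuousWithinAt
      (fun x hx => (hPd x (Set.mem_Ici.mpr (le_of_lt hx))).hasDerivAt (Ici_mem_nhds hx)) hint2 hPlim
  have hP0 : P 0 = γ2 0 - γ1 0 * γ1 0 := by simp [hP_def, hF_def]
  rw [h2, hP0]; ring

end
end

section
/- Let θ : [0,∞) → ℝ be continuous, and set γ_1 = -∫_0^∞ e^{-t} cos θ(t) dt and γ_2 = γ_1^2 - ∫_0^∞ e^{-2t} cos 2θ(t) dt. Let λ ≥ 0 satisfy ∫_0^∞ e^{-2t} cos^2 θ(t) dt = (λ + 1/2) e^{-2λ}. Then 2 γ_2^2 + γ_1^2 ≤ 2 (λ^2 e^{-2λ} + 1/2)^2 + (λ + 1)^2 e^{-2λ}. -/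
open MeasureTheory Filter Topology

noncomputable section

open Real Set

lemma int_exp_neg_two_mul_Ioi (a : ℝ) :
    ∫ x in Ioi a, Real.exp (-2 * x) = Real.exp (-2 * a) / 2 := by
  have h : ∀ x ∈ Ici a, HasDerivAt (fun y => -Real.exp (-2 * y) / 2) (Real.exp (-2 * x)) x := by
    intro x _
    have := ((hasDerivAt_id x).const_mul (-2 : ℝ)).exp
    have h2 := (this.neg).div_const (2:ℝ)
    refine h2.congr_deriv ?_
    simp
  have hint : IntegrableOn (fun x => Real.exp (-2 * x)) (Ioi a) :=
    exp_neg_integrableOn_Ioi a (by norm_num)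
  have htend : Tendsto (fun y => -Real.exp (-2 * y) / 2) atTop (𝓝 0) := by
    have h0 : Tendsto (fun y : ℝ => -2 * y) atTop atBot :=
      (tendsto_const_mul_atBot_of_neg (by norm_num)).2 tendsto_id
    have := (Real.tendsto_exp_atBot.comp h0).neg.div_const (2:ℝ)
    simpa using this
  rw [integral_Ioi_of_hasDerivAt_of_tendsto' h hint htend]; ring

lemma vl_aux (θ : ℝ → ℝ) (hθ : ContinuousOn θ (Set.Ici (0:ℝ))) (lam : ℝ) (hlam : 0 ≤ lam)
    (hint : ∫ t in Set.Ioi (0:ℝ), Real.exp (-2 * t) * (Real.cos (θ t)) ^ 2 =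
      (lam + 1 / 2) * Real.exp (-2 * lam)) :
    |∫ t in Set.Ioi (0:ℝ), Real.exp (-t) * Real.cos (θ t)| ≤ (lam + 1) * Real.exp (-lam) := by
  set ψ : ℝ → ℝ := fun t => min 1 (Real.exp (t - lam)) with hψdef
  have hψc : Continuous ψ :=
    continuous_const.min (Real.continuous_exp.comp (continuous_id.sub continuous_const))
  have hψ0 : ∀ t, 0 ≤ ψ t := fun t => le_min (by norm_num) (Real.exp_pos _).le
  have hψ1 : ∀ t, ψ t ≤ 1 := fun t => min_le_left _ _
  -- measurability of cos ∘ θ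
  have hmeas : AEMeasurable (fun t => Real.cos (θ t)) (volume.restrict (Set.Ioi (0:ℝ))) := by
    exact ((Real.continuous_cos.comp_continuousOn
      (hθ.mono Set.Ioi_subset_Ici_self)).aemeasurable measurableSet_Ioi)
  have hintexp1 : IntegrableOn (fun t : ℝ => Real.exp (-t)) (Set.Ioi (0:ℝ)) := by
    simpa using exp_neg_integrableOn_Ioi (0:ℝ) one_pos
  have hintexp2 : IntegrableOn (fun t : ℝ => Real.exp (-2 * t)) (Set.Ioi (0:ℝ)) :=
    exp_neg_integrableOn_Ioi 0 two_pos
  -- integrability of the four functions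
  have hmeasA : AEMeasurable (fun t => |Real.cos (θ t)|) (volume.restrict (Set.Ioi (0:ℝ))) := by
    exact (((continuous_abs.comp Real.continuous_cos).comp_continuousOn
      (hθ.mono Set.Ioi_subset_Ici_self)).aemeasurable measurableSet_Ioi)
  have hA : IntegrableOn (fun t => Real.exp (-t) * |Real.cos (θ t)|) (Set.Ioi (0:ℝ)) := by
    refine hintexp1.mono' ?_ ?_
    · exact ((Real.measurable_exp.comp measurable_neg).aemeasurable.mul
        hmeasA).aestronglyMeasurable
    · filter_upwards with t
      have := abs_cos_le_one (θ t)
      rw [Real.norm_eq_abs, abs_mul, abs_of_pos (Real.exp_pos _), abs_abs]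
      nlinarith [Real.exp_pos (-t), abs_nonneg (Real.cos (θ t))]
  have hA' : IntegrableOn (fun t => Real.exp (-t) * Real.cos (θ t)) (Set.Ioi (0:ℝ)) := by
    refine hintexp1.mono' ?_ ?_
    · exact ((Real.measurable_exp.comp measurable_neg).aemeasurable.mul
        hmeas).aestronglyMeasurable
    · filter_upwards with t
      have := abs_cos_le_one (θ t)
      rw [Real.norm_eq_abs, abs_mul, abs_of_pos (Real.exp_pos _)]
      nlinarith [Real.exp_pos (-t), abs_nonneg (Real.cos (θ t))]
  have hB : IntegrableOn (fun t => Real.exp (-t) * ψ t) (Set.Ioi (0:ℝ)) := by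
    refine hintexp1.mono' ((Real.continuous_exp.comp continuous_neg).mul hψc).aestronglyMeasurable ?_
    filter_upwards with t
    rw [Real.norm_eq_abs, abs_mul, abs_of_pos (Real.exp_pos _), abs_of_nonneg (hψ0 t)]
    nlinarith [Real.exp_pos (-t), hψ0 t, hψ1 t]
  have hC : IntegrableOn (fun t => Real.exp (-2 * t) * (Real.cos (θ t)) ^ 2) (Set.Ioi (0:ℝ)) := by
    refine hintexp2.mono' ?_ ?_
    · exact ((Real.measurable_exp.comp (measurable_id.const_mul (-2))).aemeasurable.mul
        (hmeas.pow_const 2)).aestronglyMeasurable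
    · filter_upwards with t
      have h1 : (Real.cos (θ t))^2 ≤ 1 := by
        have := abs_cos_le_one (θ t); nlinarith [abs_nonneg (Real.cos (θ t)), sq_abs (Real.cos (θ t))]
      rw [Real.norm_eq_abs, abs_mul, abs_of_pos (Real.exp_pos _), abs_of_nonneg (sq_nonneg _)]
      nlinarith [Real.exp_pos (-2*t), sq_nonneg (Real.cos (θ t))]
  have hD : IntegrableOn (fun t => Real.exp (-2 * t) * (ψ t) ^ 2) (Set.Ioi (0:ℝ)) := by
    refine hintexp2.mono' (((Real.continuous_exp.comp (continuous_const.mul continuous_id)).mul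
      (hψc.pow 2)).aestronglyMeasurable) ?_
    filter_upwards with t
    rw [Real.norm_eq_abs, abs_mul, abs_of_pos (Real.exp_pos _), abs_of_nonneg (sq_nonneg _)]
    have h1 : (ψ t)^2 ≤ 1 := by nlinarith [hψ0 t, hψ1 t]
    nlinarith [mul_nonneg (Real.exp_pos (-2*t)).le (sub_nonneg.2 h1)]
  -- the two model integrals
  have hsplit : Set.Ioc (0:ℝ) lam ∪ Set.Ioi lam = Set.Ioi (0:ℝ) := Set.Ioc_union_Ioi_eq_Ioi hlam
  have hdisj : Disjoint (Set.Ioc (0:ℝ) lam) (Set.Ioi lam) := Set.Ioc_disjoint_Ioi le_rfl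
  have hψIoc : ∀ t ∈ Set.Ioc (0:ℝ) lam, ψ t = Real.exp (t - lam) := by
    intro t ht
    exact min_eq_right (Real.exp_le_one_iff.2 (by linarith [ht.2]))
  have hψIoi : ∀ t ∈ Set.Ioi lam, ψ t = 1 := by
    intro t ht
    exact min_eq_left (Real.one_le_exp (by simp at ht; linarith))
  have hvol : (volume (Set.Ioc (0:ℝ) lam)).toReal = lam := by
    rw [Real.volume_Ioc, ENNReal.toReal_ofReal (by linarith)]; ring
  have hIψ1 : ∫ t in Set.Ioi (0:ℝ), Real.exp (-t) * ψ t = (lam + 1) * Real.exp (-lam) := by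
    rw [← hsplit, setIntegral_union hdisj measurableSet_Ioi
      (hB.mono_set (hsplit ▸ Set.subset_union_left))
      (hB.mono_set (hsplit ▸ Set.subset_union_right))]
    have e1 : ∫ t in Set.Ioc (0:ℝ) lam, Real.exp (-t) * ψ t = lam * Real.exp (-lam) := by
      rw [setIntegral_congr_fun measurableSet_Ioc (g := fun _ => Real.exp (-lam))]
      · rw [setIntegral_const, measureReal_def, hvol, smul_eq_mul]
      · intro t ht
        show Real.exp (-t) * ψ t = Real.exp (-lam)
        rw [hψIoc t ht, ← Real.exp_add]; congr 1; ring
    have e2 : ∫ t in Set.Ioi lam, Real.exp (-t) * ψ t = Real.exp (-lam) := by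
      rw [setIntegral_congr_fun measurableSet_Ioi (g := fun t => Real.exp (-t))]
      · exact integral_exp_neg_Ioi lam
      · intro t ht
        show Real.exp (-t) * ψ t = Real.exp (-t)
        rw [hψIoi t ht, mul_one]
    rw [e1, e2]; ring
  have hIψ2 : ∫ t in Set.Ioi (0:ℝ), Real.exp (-2 * t) * (ψ t) ^ 2
      = (lam + 1/2) * Real.exp (-2 * lam) := by
    rw [← hsplit, setIntegral_union hdisj measurableSet_Ioi
      (hD.mono_set (hsplit ▸ Set.subset_union_left))
      (hD.mono_set (hsplit ▸ Set.subset_union_right))]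
    have e1 : ∫ t in Set.Ioc (0:ℝ) lam, Real.exp (-2 * t) * (ψ t) ^ 2
        = lam * Real.exp (-2 * lam) := by
      rw [setIntegral_congr_fun measurableSet_Ioc (g := fun _ => Real.exp (-2 * lam))]
      · rw [setIntegral_const, measureReal_def, hvol, smul_eq_mul]
      · intro t ht
        show Real.exp (-2 * t) * (ψ t) ^ 2 = Real.exp (-2 * lam)
        rw [hψIoc t ht, pow_two, ← Real.exp_add, ← Real.exp_add]; congr 1; ring
    have e2 : ∫ t in Set.Ioi lam, Real.exp (-2 * t) * (ψ t) ^ 2 = Real.exp (-2 * lam) / 2 := by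
      rw [setIntegral_congr_fun measurableSet_Ioi (g := fun t => Real.exp (-2 * t))]
      · exact int_exp_neg_two_mul_Ioi lam
      · intro t ht
        show Real.exp (-2 * t) * (ψ t) ^ 2 = Real.exp (-2 * t)
        rw [hψIoi t ht]; ring
    rw [e1, e2]; ring
  -- pointwise inequality
  have hpt : ∀ t ∈ Set.Ioi (0:ℝ),
      Real.exp (-t) * |Real.cos (θ t)| ≤ Real.exp (-t) * ψ t +
        (Real.exp lam / 2) * (Real.exp (-2 * t) * (Real.cos (θ t)) ^ 2
          - Real.exp (-2 * t) * (ψ t) ^ 2) := by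
    intro t _
    set φ := |Real.cos (θ t)| with hφdef
    have hφ0 : 0 ≤ φ := abs_nonneg _
    have hφ1 : φ ≤ 1 := abs_cos_le_one _
    have hcos2 : (Real.cos (θ t))^2 = φ^2 := (sq_abs _).symm
    have he2 : Real.exp (-2 * t) = Real.exp (-t) ^ 2 := by
      simp only [pow_two, ← Real.exp_add]; congr 1; ring
    rw [hcos2, he2]
    set a := Real.exp (-t) with hadef
    have ha : 0 < a := Real.exp_pos _
    have hb : 0 < Real.exp lam := Real.exp_pos _
    rcases le_or_gt lam t with hc | hc
    · have hψt : ψ t = 1 := min_eq_left (Real.one_le_exp (by linarith))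
      have hab : Real.exp lam * a ≤ 1 := by
        rw [hadef, ← Real.exp_add]
        exact Real.exp_le_one_iff.2 (by linarith)
      rw [hψt]
      nlinarith [mul_nonneg (mul_nonneg ha.le (sub_nonneg.2 hφ1))
        (sub_nonneg.2 (show Real.exp lam * a / 2 * (1 + φ) ≤ 1 by nlinarith))]
    · have hψt : ψ t = Real.exp (t - lam) := min_eq_right (Real.exp_le_one_iff.2 (by linarith))
      rw [hψt]
      set v := Real.exp (t - lam) with hvdef
      have hv : 0 < v := Real.exp_pos _
      have hkey : Real.exp lam * a ^ 2 * v = a := by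
        rw [hvdef, hadef]
        simp only [pow_two, ← Real.exp_add]; congr 1; ring
      nlinarith [mul_nonneg (mul_nonneg hb.le (sq_nonneg a)) (sq_nonneg (φ - v)), hkey]
  -- integrate the pointwise inequality
  have hRHSint : IntegrableOn (fun t => Real.exp (-t) * ψ t +
      (Real.exp lam / 2) * (Real.exp (-2 * t) * (Real.cos (θ t)) ^ 2
        - Real.exp (-2 * t) * (ψ t) ^ 2)) (Set.Ioi (0:ℝ)) := by
    have hG : IntegrableOn (fun t => (Real.exp lam / 2) *
        (Real.exp (-2 * t) * (Real.cos (θ t)) ^ 2 - Real.exp (-2 * t) * (ψ t) ^ 2))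
        (Set.Ioi (0:ℝ)) := (hC.sub hD).const_mul _
    exact hB.add hG
  have hmono := setIntegral_mono_on hA hRHSint measurableSet_Ioi hpt
  have hRHSval : ∫ t in Set.Ioi (0:ℝ), (Real.exp (-t) * ψ t +
      (Real.exp lam / 2) * (Real.exp (-2 * t) * (Real.cos (θ t)) ^ 2
        - Real.exp (-2 * t) * (ψ t) ^ 2)) = (lam + 1) * Real.exp (-lam) := by
    have hG : IntegrableOn (fun t => (Real.exp lam / 2) *
        (Real.exp (-2 * t) * (Real.cos (θ t)) ^ 2 - Real.exp (-2 * t) * (ψ t) ^ 2))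
        (Set.Ioi (0:ℝ)) := (hC.sub hD).const_mul _
    rw [integral_add hB hG, integral_const_mul _ _, integral_sub hC hD, hint, hIψ1, hIψ2]
    ring
  have habs : |∫ t in Set.Ioi (0:ℝ), Real.exp (-t) * Real.cos (θ t)|
      ≤ ∫ t in Set.Ioi (0:ℝ), Real.exp (-t) * |Real.cos (θ t)| := by
    have hn := norm_integral_le_integral_norm
      (f := fun t => Real.exp (-t) * Real.cos (θ t)) (μ := volume.restrict (Set.Ioi (0:ℝ)))
    rw [Real.norm_eq_abs] at hn
    refine hn.trans (le_of_eq ?_)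
    refine setIntegral_congr_fun measurableSet_Ioi fun t _ => ?_
    show ‖Real.exp (-t) * Real.cos (θ t)‖ = Real.exp (-t) * |Real.cos (θ t)|
    rw [Real.norm_eq_abs, abs_mul, abs_of_pos (Real.exp_pos _)]
  rw [hRHSval] at hmono
  linarith [habs, hmono]

/-- **Inequality (24).** With `γ₁ = -∫₀^∞ e^{-t} cos θ(t) dt`,
`γ₂ = γ₁² - ∫₀^∞ e^{-2t} cos 2θ(t) dt` and `λ ≥ 0` determined by
`∫₀^∞ e^{-2t} cos² θ(t) dt = (λ + 1/2) e^{-2λ}`, one has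
`2γ₂² + γ₁² ≤ 2(λ²e^{-2λ} + 1/2)² + (λ+1)²e^{-2λ}`. -/
theorem valiron_landau_bound (θ : ℝ → ℝ) (hθ : ContinuousOn θ (Set.Ici (0:ℝ)))
    (γ1 γ2 lam : ℝ)
    (hγ1 : γ1 = -∫ t in Set.Ioi (0:ℝ), Real.exp (-t) * Real.cos (θ t))
    (hγ2 : γ2 = γ1 ^ 2 - ∫ t in Set.Ioi (0:ℝ), Real.exp (-2 * t) * Real.cos (2 * θ t))
    (hlam : 0 ≤ lam)
    (hint : ∫ t in Set.Ioi (0:ℝ), Real.exp (-2 * t) * (Real.cos (θ t)) ^ 2 =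
      (lam + 1 / 2) * Real.exp (-2 * lam)) :
    2 * γ2 ^ 2 + γ1 ^ 2 ≤
      2 * (lam ^ 2 * Real.exp (-2 * lam) + 1 / 2) ^ 2 +
        (lam + 1) ^ 2 * Real.exp (-2 * lam) := by
  have hmeas : AEMeasurable (fun t => Real.cos (θ t)) (volume.restrict (Set.Ioi (0:ℝ))) :=
    ((Real.continuous_cos.comp_continuousOn
      (hθ.mono Set.Ioi_subset_Ici_self)).aemeasurable measurableSet_Ioi)
  have hintexp2 : IntegrableOn (fun t : ℝ => Real.exp (-2 * t)) (Set.Ioi (0:ℝ)) :=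
    exp_neg_integrableOn_Ioi 0 two_pos
  have hC : IntegrableOn (fun t => Real.exp (-2 * t) * (Real.cos (θ t)) ^ 2) (Set.Ioi (0:ℝ)) := by
    refine hintexp2.mono' ?_ ?_
    · exact ((Real.measurable_exp.comp (measurable_id.const_mul (-2))).aemeasurable.mul
        (hmeas.pow_const 2)).aestronglyMeasurable
    · filter_upwards with t
      have h1 : (Real.cos (θ t))^2 ≤ 1 := by
        nlinarith [abs_cos_le_one (θ t), abs_nonneg (Real.cos (θ t)), sq_abs (Real.cos (θ t))]
      rw [Real.norm_eq_abs, abs_mul, abs_of_pos (Real.exp_pos _), abs_of_nonneg (sq_nonneg _)]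
      nlinarith [mul_nonneg (Real.exp_pos (-2*t)).le (sub_nonneg.2 h1)]
  have hC2 : IntegrableOn (fun t => 2 * (Real.exp (-2 * t) * (Real.cos (θ t)) ^ 2))
      (Set.Ioi (0:ℝ)) := hC.const_mul 2
  have h2 : ∫ t in Set.Ioi (0:ℝ), Real.exp (-2 * t) * Real.cos (2 * θ t)
      = 2 * ((lam + 1/2) * Real.exp (-2 * lam)) - 1/2 := by
    have hcong : ∫ t in Set.Ioi (0:ℝ), Real.exp (-2 * t) * Real.cos (2 * θ t)
        = ∫ t in Set.Ioi (0:ℝ),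
            (2 * (Real.exp (-2 * t) * (Real.cos (θ t)) ^ 2) - Real.exp (-2 * t)) := by
      refine setIntegral_congr_fun measurableSet_Ioi fun t _ => ?_
      show Real.exp (-2 * t) * Real.cos (2 * θ t)
          = 2 * (Real.exp (-2 * t) * (Real.cos (θ t)) ^ 2) - Real.exp (-2 * t)
      rw [Real.cos_two_mul]; ring
    rw [hcong, integral_sub hC2 hintexp2, integral_const_mul _ _, hint,
      int_exp_neg_two_mul_Ioi]
    norm_num
  have hVL := vl_aux θ hθ lam hlam hint
  have hM : (0:ℝ) ≤ (lam + 1) * Real.exp (-lam) := by positivity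
  have hγ1sq : γ1 ^ 2 ≤ (lam + 1) ^ 2 * Real.exp (-2 * lam) := by
    have h1 : γ1 ^ 2 = |∫ t in Set.Ioi (0:ℝ), Real.exp (-t) * Real.cos (θ t)| ^ 2 := by
      rw [hγ1, sq_abs]; ring
    have h2' := pow_le_pow_left₀ (abs_nonneg _) hVL 2
    have h3 : Real.exp (-lam) ^ 2 = Real.exp (-2 * lam) := by
      simp only [pow_two, ← Real.exp_add]; congr 1; ring
    rw [h1]
    calc _ ≤ ((lam + 1) * Real.exp (-lam)) ^ 2 := h2'
      _ = (lam + 1) ^ 2 * Real.exp (-2 * lam) := by rw [mul_pow, h3]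
  set E := Real.exp (-2 * lam) with hEdef
  have hE : 0 < E := Real.exp_pos _
  have hE1 : (2 * lam + 1) * E ≤ 1 := by
    have ha := Real.add_one_le_exp (2 * lam)
    have hb : E * Real.exp (2 * lam) = 1 := by
      rw [hEdef, ← Real.exp_add]; norm_num
    nlinarith
  have hγ2eq : γ2 = γ1 ^ 2 - (2 * lam + 1) * E + 1/2 := by
    rw [hγ2, h2]; ring
  have hup : γ2 ≤ lam ^ 2 * E + 1/2 := by nlinarith [sq_nonneg γ1]
  have hlow : -(lam ^ 2 * E + 1/2) ≤ γ2 := by nlinarith [sq_nonneg γ1, sq_nonneg lam]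
  have hγ2sq : γ2 ^ 2 ≤ (lam ^ 2 * E + 1/2) ^ 2 := sq_le_sq' hlow hup
  nlinarith [hγ2sq, hγ1sq]

end
end

section
/- Define F : [0,∞) → ℝ by F(λ) = 2 (λ^2 e^{-2λ} + 1/2)^2 + (λ + 1)^2 e^{-2λ}. Then there is a unique λ_0 ∈ [0,∞) with 4 e^{-2λ_0}(λ_0^2 - λ_0^3) - 3 λ_0 + 1 = 0, F attains its maximum over [0,∞) at λ_0, F(λ_0) - 3/2 = 2 λ_0^4 e^{-4λ_0} + (3 λ_0^2 + 2 λ_0 + 1) e^{-2λ_0} - 1, and moreover 0.39004568 < λ_0 < 0.39004569 and 0.0348561 < F(λ_0) - 3/2 < 0.0348562. -/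
open MeasureTheory Filter Topology

noncomputable section

/-- The auxiliary function `F(λ) = 2(λ²e^{-2λ} + 1/2)² + (λ+1)²e^{-2λ}`. -/
def Fmilin (lam : ℝ) : ℝ :=
  2 * (lam ^ 2 * Real.exp (-2 * lam) + 1 / 2) ^ 2 + (lam + 1) ^ 2 * Real.exp (-2 * lam)

set_option maxHeartbeats 1000000




private lemma exp_pt_bounds (x lo hi : ℝ) (hx0 : -1 ≤ x) (hx1 : x ≤ 0)
    (hlo : lo ≤ (∑ m ∈ Finset.range 14, x ^ m / m.factorial) - (-x) ^ 14 * (15 / (87178291200 * 14)))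
    (hhi : (∑ m ∈ Finset.range 14, x ^ m / m.factorial) + (-x) ^ 14 * (15 / (87178291200 * 14)) ≤ hi) :
    lo ≤ Real.exp x ∧ Real.exp x ≤ hi := by
  have h := Real.exp_bound (x := x) (abs_le.mpr ⟨hx0, by linarith⟩) (n := 14) (by norm_num)
  rw [show ((14:ℕ).succ : ℝ) / ((14:ℕ).factorial * (14:ℕ)) = 15 / (87178291200 * 14) by
    norm_num [Nat.factorial]] at h
  rw [show |x| = -x by rw [abs_of_nonpos hx1], abs_le] at h
  constructor <;> linarith [h.1, h.2]

private lemma expa_bounds :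
    (0.45836413324433 : ℝ) ≤ Real.exp (-0.78009136) ∧
      Real.exp (-0.78009136) ≤ 0.45836413324510 := by
  apply exp_pt_bounds (hx0 := by norm_num) (hx1 := by norm_num) <;>
  · rw [Finset.sum_range_succ, Finset.sum_range_succ, Finset.sum_range_succ,
      Finset.sum_range_succ, Finset.sum_range_succ, Finset.sum_range_succ,
      Finset.sum_range_succ, Finset.sum_range_succ, Finset.sum_range_succ,
      Finset.sum_range_succ, Finset.sum_range_succ, Finset.sum_range_succ,
      Finset.sum_range_succ, Finset.sum_range_succ, Finset.sum_range_zero]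
    norm_num [Nat.factorial]

private lemma expb_bounds :
    (0 : ℝ) ≤ Real.exp (-0.78009138) ∧ Real.exp (-0.78009138) ≤ 0.45836412407782 := by
  apply exp_pt_bounds (hx0 := by norm_num) (hx1 := by norm_num) <;>
  · rw [Finset.sum_range_succ, Finset.sum_range_succ, Finset.sum_range_succ,
      Finset.sum_range_succ, Finset.sum_range_succ, Finset.sum_range_succ,
      Finset.sum_range_succ, Finset.sum_range_succ, Finset.sum_range_succ,
      Finset.sum_range_succ, Finset.sum_range_succ, Finset.sum_range_succ,
      Finset.sum_range_succ, Finset.sum_range_succ, Finset.sum_range_zero]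
    norm_num [Nat.factorial]


private def phiM (l : ℝ) : ℝ := 4 * Real.exp (-2 * l) * (l ^ 2 - l ^ 3) - 3 * l + 1

private lemma expDeriv (l : ℝ) :
    HasDerivAt (fun t : ℝ => Real.exp (-2 * t)) (Real.exp (-2 * l) * (-2)) l := by
  have h1 : HasDerivAt (fun t : ℝ => -2 * t) (-2) l := by
    simpa using (hasDerivAt_id l).const_mul (-2)
  exact (Real.hasDerivAt_exp _).comp l h1

private lemma phiM_hasDeriv (l : ℝ) :
    HasDerivAt phiM (4 * Real.exp (-2 * l) * (2 * l ^ 3 - 5 * l ^ 2 + 2 * l) - 3) l := by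
  have hP : HasDerivAt (fun t : ℝ => t ^ 2 - t ^ 3) (2 * l - 3 * l ^ 2) l := by
    exact ((hasDerivAt_pow 2 l).sub (hasDerivAt_pow 3 l)).congr_deriv (by norm_num)
  have hlin : HasDerivAt (fun t : ℝ => 3 * t) 3 l := by
    simpa using (hasDerivAt_id l).const_mul (3:ℝ)
  have h := ((((expDeriv l).mul hP).const_mul 4).sub hlin).add_const 1
  have heq : phiM = fun t : ℝ =>
      4 * (Real.exp (-2 * t) * (t ^ 2 - t ^ 3)) - 3 * t + 1 := by
    funext t; unfold phiM; ring
  rw [heq]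
  exact h.congr_deriv (by ring)

private lemma phiM_deriv_neg {l : ℝ} (hl : 0 < l) :
    4 * Real.exp (-2 * l) * (2 * l ^ 3 - 5 * l ^ 2 + 2 * l) - 3 < 0 := by
  have hsum := Real.sum_le_exp_of_nonneg (x := 2 * l) (by linarith) 5
  rw [Finset.sum_range_succ, Finset.sum_range_succ, Finset.sum_range_succ,
    Finset.sum_range_succ, Finset.sum_range_succ, Finset.sum_range_zero] at hsum
  norm_num [Nat.factorial] at hsum
  have hP : 1 + 2 * l + 2 * l ^ 2 + 4 / 3 * l ^ 3 + 2 / 3 * l ^ 4 ≤ Real.exp (2 * l) := by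
    nlinarith [hsum]
  have hmul : Real.exp (-2 * l) * Real.exp (2 * l) = 1 := by
    rw [← Real.exp_add]; norm_num
  have hEpos : 0 < Real.exp (-2 * l) := Real.exp_pos _
  have hEP : Real.exp (-2 * l) * (1 + 2 * l + 2 * l ^ 2 + 4 / 3 * l ^ 3 + 2 / 3 * l ^ 4) ≤ 1 := by
    calc Real.exp (-2 * l) * (1 + 2 * l + 2 * l ^ 2 + 4 / 3 * l ^ 3 + 2 / 3 * l ^ 4)
        ≤ Real.exp (-2 * l) * Real.exp (2 * l) := mul_le_mul_of_nonneg_left hP hEpos.le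
      _ = 1 := hmul
  have hpoly : 0 < 2 * l ^ 4 - 4 * l ^ 3 + 26 * l ^ 2 - 2 * l + 3 := by
    nlinarith [sq_nonneg (l * (l - 1)), sq_nonneg (12 * l - 1)]
  nlinarith [mul_pos hEpos hpoly]

private lemma phiM_strictAnti : StrictAntiOn phiM (Set.Ici (0:ℝ)) := by
  apply strictAntiOn_of_deriv_neg (convex_Ici 0)
  · exact fun l _ => (phiM_hasDeriv l).continuousAt.continuousWithinAt
  · intro l hl
    rw [interior_Ici] at hl
    rw [(phiM_hasDeriv l).deriv]
    exact phiM_deriv_neg hl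

private lemma Fmilin_hasDeriv (l : ℝ) :
    HasDerivAt Fmilin (2 * l * Real.exp (-2 * l) * phiM l) l := by
  have hA : HasDerivAt (fun t : ℝ => t ^ 2 * Real.exp (-2 * t) + 1 / 2)
      (2 * l * Real.exp (-2 * l) + l ^ 2 * (Real.exp (-2 * l) * (-2))) l := by
    have := ((hasDerivAt_pow 2 l).mul (expDeriv l)).add_const (1/2)
    exact this.congr_deriv (by ring)
  have hB : HasDerivAt (fun t : ℝ => (t + 1) ^ 2) (2 * (l + 1)) l := by
    have := ((hasDerivAt_id l).add_const 1).pow 2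
    exact this.congr_deriv (by norm_num)
  have h := (((hA.mul hA).const_mul 2).add (hB.mul (expDeriv l)))
  have heq : Fmilin = fun t : ℝ =>
      2 * ((t ^ 2 * Real.exp (-2 * t) + 1 / 2) * (t ^ 2 * Real.exp (-2 * t) + 1 / 2)) +
        (t + 1) ^ 2 * Real.exp (-2 * t) := by
    funext t; unfold Fmilin; ring
  rw [heq]
  exact h.congr_deriv (by unfold phiM; ring)


/-- There is a unique zero `λ₀ ∈ [0,∞)` of `4e^{-2λ}(λ² - λ³) - 3λ + 1`; `F` attains its
maximum over `[0,∞)` at `λ₀`; `F(λ₀) - 3/2 = 2λ₀⁴e^{-4λ₀} + (3λ₀² + 2λ₀ + 1)e^{-2λ₀} - 1`;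
and `0.39004568 < λ₀ < 0.39004569`, `0.0348561 < F(λ₀) - 3/2 < 0.0348562`. -/
theorem Fmilin_max : ∃ lam0 : ℝ,
    (0 ≤ lam0 ∧ 4 * Real.exp (-2 * lam0) * (lam0 ^ 2 - lam0 ^ 3) - 3 * lam0 + 1 = 0) ∧
    (∀ lam : ℝ, 0 ≤ lam →
      4 * Real.exp (-2 * lam) * (lam ^ 2 - lam ^ 3) - 3 * lam + 1 = 0 → lam = lam0) ∧
    (∀ lam : ℝ, 0 ≤ lam → Fmilin lam ≤ Fmilin lam0) ∧
    (Fmilin lam0 - 3 / 2 =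
      2 * lam0 ^ 4 * Real.exp (-4 * lam0) +
        (3 * lam0 ^ 2 + 2 * lam0 + 1) * Real.exp (-2 * lam0) - 1) ∧
    (0.39004568 < lam0 ∧ lam0 < 0.39004569) ∧
    (0.0348561 < Fmilin lam0 - 3 / 2 ∧ Fmilin lam0 - 3 / 2 < 0.0348562) := by
  have hEa_lo := expa_bounds.1
  have hEa_hi := expa_bounds.2
  have hEb_hi := expb_bounds.2
  have cont : Continuous phiM :=
    continuous_iff_continuousAt.mpr fun l => (phiM_hasDeriv l).continuousAt
  have hra : (-2:ℝ) * 0.39004568 = -0.78009136 := by norm_num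
  have hrb : (-2:ℝ) * 0.39004569 = -0.78009138 := by norm_num
  have hpa : 0 < phiM 0.39004568 := by
    unfold phiM; rw [hra]; nlinarith [hEa_lo, hEa_hi]
  have hpa' : phiM 0.39004568 ≤ 1e-9 := by
    unfold phiM; rw [hra]; nlinarith [hEa_lo, hEa_hi]
  have hpb : phiM 0.39004569 < 0 := by
    unfold phiM; rw [hrb]; nlinarith [hEb_hi, Real.exp_pos (-0.78009138 : ℝ)]
  have hhab : (0.39004568 : ℝ) ≤ 0.39004569 := by norm_num
  have hIVT := intermediate_value_Icc' hhab (cont.continuousOn)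
  obtain ⟨lam0, hmem, hval⟩ := hIVT (Set.mem_Icc.mpr ⟨hpb.le, hpa.le⟩)
  obtain ⟨hal, hlb⟩ := Set.mem_Icc.mp hmem
  have hl0pos : (0:ℝ) < lam0 := lt_of_lt_of_le (by norm_num) hal
  have hl0mem : lam0 ∈ Set.Ici (0:ℝ) := le_of_lt hl0pos
  have halt : (0.39004568 : ℝ) < lam0 := by
    rcases lt_or_eq_of_le hal with h | h
    · exact h
    · exact absurd (h ▸ hval) (ne_of_gt hpa)
  have hblt : lam0 < (0.39004569 : ℝ) := by
    rcases lt_or_eq_of_le hlb with h | h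
    · exact h
    · exact absurd (h ▸ hval) (ne_of_lt hpb)
  -- key sign facts
  have hphi_pos : ∀ x : ℝ, 0 ≤ x → x < lam0 → 0 < phiM x := fun x hx hxl => by
    have := phiM_strictAnti hx hl0mem hxl
    rw [hval] at this; exact this
  have hphi_neg : ∀ x : ℝ, lam0 < x → phiM x < 0 := fun x hxl => by
    have := phiM_strictAnti hl0mem (le_of_lt (lt_of_le_of_lt hl0pos.le hxl)) hxl
    rw [hval] at this; exact this
  have hFd : Differentiable ℝ Fmilin := fun l => (Fmilin_hasDeriv l).differentiableAt
  -- monotone on [0, lam0]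
  have hmono : MonotoneOn Fmilin (Set.Icc 0 lam0) := by
    apply monotoneOn_of_deriv_nonneg (convex_Icc 0 lam0) hFd.continuous.continuousOn
      (hFd.differentiableOn)
    intro x hx
    rw [interior_Icc] at hx
    rw [(Fmilin_hasDeriv x).deriv]
    exact mul_nonneg (mul_nonneg (by linarith [hx.1]) (Real.exp_pos _).le)
      (hphi_pos x hx.1.le hx.2).le
  have hanti : AntitoneOn Fmilin (Set.Ici lam0) := by
    apply antitoneOn_of_deriv_nonpos (convex_Ici lam0) hFd.continuous.continuousOn
      (hFd.differentiableOn)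
    intro x hx
    rw [interior_Ici] at hx
    rw [(Fmilin_hasDeriv x).deriv]
    have h1 := hphi_neg x hx
    have h2 : (0:ℝ) < 2 * x * Real.exp (-2 * x) :=
      mul_pos (by linarith [hl0pos, Set.mem_Ioi.mp hx]) (Real.exp_pos _)
    nlinarith [mul_pos h2 (neg_pos.mpr h1)]
  -- identity
  have hid : ∀ l : ℝ, Fmilin l - 3 / 2 =
      2 * l ^ 4 * Real.exp (-4 * l) + (3 * l ^ 2 + 2 * l + 1) * Real.exp (-2 * l) - 1 := by
    intro l
    have h4 : Real.exp (-4 * l) = Real.exp (-2 * l) * Real.exp (-2 * l) := by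
      rw [← Real.exp_add]; ring_nf
    unfold Fmilin; rw [h4]; ring
  -- numeric value of Fmilin at a
  have hFa : Fmilin 0.39004568 - 3 / 2 =
      2 * 0.39004568 ^ 4 * (Real.exp (-0.78009136) * Real.exp (-0.78009136)) +
        (3 * 0.39004568 ^ 2 + 2 * 0.39004568 + 1) * Real.exp (-0.78009136) - 1 := by
    rw [hid 0.39004568, hra, show (-4:ℝ) * 0.39004568 = -0.78009136 + -0.78009136 by norm_num,
      Real.exp_add]
  have hEsq : (0.45836413324433 : ℝ) * 0.45836413324433 ≤
      Real.exp (-0.78009136) * Real.exp (-0.78009136) :=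
    mul_le_mul hEa_lo hEa_lo (by norm_num) (Real.exp_pos _).le
  have hEsq' : Real.exp (-0.78009136) * Real.exp (-0.78009136) ≤
      (0.45836413324510 : ℝ) * 0.45836413324510 :=
    mul_le_mul hEa_hi hEa_hi (Real.exp_pos _).le (by norm_num)
  have hFa_lo : (0.0348561 : ℝ) < Fmilin 0.39004568 - 3 / 2 := by
    rw [hFa]; nlinarith [hEa_lo, hEsq]
  have hFa_hi : Fmilin 0.39004568 - 3 / 2 < (0.0348562 : ℝ) - 1e-17 := by
    rw [hFa]; nlinarith [hEa_hi, hEsq']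
  -- F lam0 vs F a
  have hFlo : Fmilin 0.39004568 ≤ Fmilin lam0 :=
    hmono (Set.mem_Icc.mpr ⟨by norm_num, halt.le⟩) (Set.mem_Icc.mpr ⟨hl0pos.le, le_refl _⟩)
      halt.le
  have hFhi : Fmilin lam0 ≤ Fmilin 0.39004568 + 1e-17 := by
    obtain ⟨c, hc, hc'⟩ := exists_hasDerivAt_eq_slope Fmilin
      (fun x => 2 * x * Real.exp (-2 * x) * phiM x) halt
      hFd.continuous.continuousOn (fun x _ => Fmilin_hasDeriv x)
    have hne : lam0 - 0.39004568 ≠ 0 := by linarith [halt]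
    have heq : Fmilin lam0 - Fmilin 0.39004568 =
        2 * c * Real.exp (-2 * c) * phiM c * (lam0 - 0.39004568) := by
      rw [hc']; field_simp
    have hcpos : (0:ℝ) < c := lt_trans (by norm_num) hc.1
    have hphic_pos : 0 < phiM c := hphi_pos c hcpos.le hc.2
    have hphic_le : phiM c ≤ phiM 0.39004568 :=
      (phiM_strictAnti (by norm_num) hcpos.le hc.1).le
    have hcE : Real.exp (-2 * c) ≤ 1 := Real.exp_le_one_iff.mpr (by linarith)
    have hcE0 : 0 < Real.exp (-2 * c) := Real.exp_pos _
    have hcb : c < 0.39004569 := lt_trans hc.2 hblt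
    have h2cE : 2 * c * Real.exp (-2 * c) ≤ 0.79 := by
      have := mul_le_mul (by linarith : 2 * c ≤ 0.79) hcE hcE0.le (by norm_num : (0:ℝ) ≤ 0.79)
      linarith [this]
    have hder_le : 2 * c * Real.exp (-2 * c) * phiM c ≤ 1e-9 := by
      have h1 : 2 * c * Real.exp (-2 * c) * phiM c ≤ 1 * phiM c :=
        mul_le_mul_of_nonneg_right (by linarith) hphic_pos.le
      linarith [hpa', hphic_le]
    have hder_ge : 0 ≤ 2 * c * Real.exp (-2 * c) * phiM c := by positivity
    nlinarith [heq, hder_le, hder_ge, hblt, halt]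
  refine ⟨lam0, ⟨hl0pos.le, by have := hval; unfold phiM at this; linarith [this]⟩,
    ?_, ?_, hid lam0, ⟨halt, hblt⟩, ?_, ?_⟩
  · intro lam hlam hlz
    refine phiM_strictAnti.injOn hlam hl0mem ?_
    rw [hval]; unfold phiM; linarith
  · intro lam hlam
    rcases le_total lam lam0 with h | h
    · exact hmono (Set.mem_Icc.mpr ⟨hlam, h⟩) (Set.mem_Icc.mpr ⟨hl0pos.le, le_refl _⟩) h
    · exact hanti (Set.mem_Ici.mpr (le_refl _)) (Set.mem_Ici.mpr h) h
  · linarith [hFa_lo, hFlo]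
  · linarith [hFa_hi, hFhi]


end
end
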